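/- arXiv:1605.04203 — 7 statements merged into one kernel-verified Lean document; each statement's English description precedes it below -/
import Mathlib

section
/- Let J ⊆ ℂ[x_0,…,x_n] be a homogeneous ideal, let ℓ ∈ ℂ[x_0,…,x_n] be homogeneous of degree 1, and let w ∈ ℝ^{n+1}. If the initial form In_w(ℓ) is not a zero-divisor in the quotient ring ℂ[x_0,…,x_n]/In_w(J), then In_w(J + ⟨ℓ − 1⟩) = In_w(J) + In_w(⟨ℓ − 1⟩), where ⟨ℓ − 1⟩ denotes the principal ideal generated by ℓ − 1. -/
open MvPolynomial
open scoped Classical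

noncomputable section

/-- The weight `w · α` of an exponent vector `α`. -/
def wdeg {n : ℕ} (w : Fin n → ℝ) (α : Fin n →₀ ℕ) : ℝ := ∑ i, w i * (α i : ℝ)

/-- The initial form `In_w(f)` of a polynomial: the sum of the terms of `f` whose
`w`-weight is maximal over the support of `f` (and `In_w(0) = 0`). -/
def initialForm {R : Type*} [CommSemiring R] {n : ℕ} (w : Fin n → ℝ)
    (f : MvPolynomial (Fin n) R) : MvPolynomial (Fin n) R :=
  ∑ α ∈ f.support.filter (fun α => ∀ β ∈ f.support, wdeg w β ≤ wdeg w α),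
    monomial α (coeff α f)

/-- The initial ideal `In_w(I)`: the ideal generated by the initial forms of elements of `I`. -/
def initialIdeal {R : Type*} [CommRing R] {n : ℕ} (w : Fin n → ℝ)
    (I : Ideal (MvPolynomial (Fin n) R)) : Ideal (MvPolynomial (Fin n) R) :=
  Ideal.span {g | ∃ f ∈ I, g = initialForm w f}


namespace InitialAux

variable {n : ℕ} (w : Fin n → ℝ)

lemma wdeg_add (α β : Fin n →₀ ℕ) : wdeg w (α + β) = wdeg w α + wdeg w β := by
  simp [wdeg, ← Finset.sum_add_distrib, mul_add]

lemma wdeg_zero : wdeg w 0 = 0 := by simp [wdeg]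

/-- The top `w`-weight of a polynomial, `⊥` for `0`. -/
def W {R : Type*} [CommSemiring R] (f : MvPolynomial (Fin n) R) : WithBot ℝ :=
  f.support.sup (fun α => (wdeg w α : WithBot ℝ))

variable {R : Type*} [CommSemiring R]

lemma le_W_of_mem {f : MvPolynomial (Fin n) R} {α} (h : α ∈ f.support) :
    (wdeg w α : WithBot ℝ) ≤ W w f := Finset.le_sup (f := fun α => (wdeg w α : WithBot ℝ)) h

lemma le_W_of_coeff {f : MvPolynomial (Fin n) R} {α} (h : coeff α f ≠ 0) :
    (wdeg w α : WithBot ℝ) ≤ W w f := le_W_of_mem w (by simpa [mem_support_iff] using h)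

lemma W_le_iff {f : MvPolynomial (Fin n) R} {c : WithBot ℝ} :
    W w f ≤ c ↔ ∀ α ∈ f.support, (wdeg w α : WithBot ℝ) ≤ c := Finset.sup_le_iff

@[simp] lemma W_zero : W w (0 : MvPolynomial (Fin n) R) = ⊥ := by simp [W]

lemma W_eq_bot_iff {f : MvPolynomial (Fin n) R} : W w f = ⊥ ↔ f = 0 := by
  constructor
  · intro h
    by_contra hf
    obtain ⟨α, hα⟩ := f.support.nonempty_of_ne_empty (by simpa [MvPolynomial.support_eq_empty] using hf)
    have := le_W_of_mem w hα
    simp [h] at this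
  · rintro rfl; simp

lemma exists_wdeg_eq_W {f : MvPolynomial (Fin n) R} (hf : f ≠ 0) :
    ∃ α ∈ f.support, (wdeg w α : WithBot ℝ) = W w f := by
  obtain ⟨α, hα, h⟩ := Finset.exists_mem_eq_sup f.support
    (by simpa [MvPolynomial.support_eq_empty, Finset.nonempty_iff_ne_empty] using hf)
    (fun α => (wdeg w α : WithBot ℝ))
  exact ⟨α, hα, h.symm⟩

lemma W_mono {f g : MvPolynomial (Fin n) R} (h : f.support ⊆ g.support) :
    W w f ≤ W w g := Finset.sup_mono h

/-- Master coefficient formula for `initialForm`. -/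
lemma coeff_initialForm (f : MvPolynomial (Fin n) R) (β : Fin n →₀ ℕ) :
    coeff β (initialForm w f) =
      if (wdeg w β : WithBot ℝ) = W w f then coeff β f else 0 := by
  rw [initialForm, coeff_sum]
  simp only [coeff_monomial]
  by_cases hβ : β ∈ f.support.filter (fun α => ∀ γ ∈ f.support, wdeg w γ ≤ wdeg w α)
  · rw [Finset.sum_eq_single_of_mem β hβ (fun b _ hb => by simp [hb])]
    simp only [if_pos rfl]
    rw [Finset.mem_filter] at hβ
    have : (wdeg w β : WithBot ℝ) = W w f := by
      refine le_antisymm (le_W_of_mem w hβ.1) ?_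
      rw [W_le_iff]
      intro γ hγ
      exact_mod_cast hβ.2 γ hγ
    rw [if_pos this]
    simp
  · have : ∀ b ∈ f.support.filter (fun α => ∀ γ ∈ f.support, wdeg w γ ≤ wdeg w α),
        (if b = β then coeff b f else 0) = 0 := by
      intro b hb
      rcases eq_or_ne b β with rfl | hne
      · exact absurd hb hβ
      · simp [hne]
    rw [Finset.sum_eq_zero this]
    rw [Finset.mem_filter] at hβ
    split_ifs with htop
    · by_cases hsupp : β ∈ f.support
      · exfalso
        apply hβ
        refine ⟨hsupp, fun γ hγ => ?_⟩
        have := le_W_of_mem w hγ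
        rw [← htop] at this
        exact_mod_cast this
      · rw [MvPolynomial.notMem_support_iff] at hsupp
        exact hsupp.symm
    · rfl

lemma support_initialForm_subset (f : MvPolynomial (Fin n) R) :
    (initialForm w f).support ⊆ f.support := by
  intro α hα
  rw [mem_support_iff] at hα ⊢
  rw [coeff_initialForm] at hα
  intro h; apply hα; split_ifs <;> simp [h]

lemma wdeg_of_mem_initialForm {f : MvPolynomial (Fin n) R} {α}
    (h : α ∈ (initialForm w f).support) : (wdeg w α : WithBot ℝ) = W w f := by
  rw [mem_support_iff, coeff_initialForm] at h
  by_contra hc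
  rw [if_neg hc] at h
  exact h rfl

lemma initialForm_ne_zero {f : MvPolynomial (Fin n) R} (hf : f ≠ 0) :
    initialForm w f ≠ 0 := by
  obtain ⟨α, hα, h⟩ := exists_wdeg_eq_W w hf
  intro h0
  have : coeff α (initialForm w f) = 0 := by simp [h0]
  rw [coeff_initialForm, if_pos h] at this
  rw [mem_support_iff] at hα
  exact hα this

@[simp] lemma initialForm_zero : initialForm w (0 : MvPolynomial (Fin n) R) = 0 := by
  ext β; rw [coeff_initialForm]; simp

end InitialAux

section Chunk2
namespace InitialAux

variable {n : ℕ} (w : Fin n → ℝ) {R : Type*} [CommRing R]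

lemma supp_sub_initialForm {f : MvPolynomial (Fin n) R} {α}
    (h : α ∈ (f - initialForm w f).support) : (wdeg w α : WithBot ℝ) < W w f := by
  rw [mem_support_iff, coeff_sub, coeff_initialForm] at h
  split_ifs at h with ht
  · simp at h
  · refine lt_of_le_of_ne (le_W_of_coeff w ?_) ht
    intro hc; rw [hc] at h; simp at h

/-- `p + lower` lemma: if all monomials of `p` have weight `c` and all monomials
of `r` have weight `< c`, and `p ≠ 0`, then `W (p + r) = c` and `In (p + r) = p`. -/
lemma initialForm_add_of_lower {p r : MvPolynomial (Fin n) R} {c : ℝ}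
    (hp0 : p ≠ 0)
    (hp : ∀ α ∈ p.support, wdeg w α = c)
    (hr : ∀ α ∈ r.support, (wdeg w α : WithBot ℝ) < (c : WithBot ℝ)) :
    W w (p + r) = (c : WithBot ℝ) ∧ initialForm w (p + r) = p := by
  have hcoeffr : ∀ β, wdeg w β = c → coeff β r = 0 := by
    intro β hβ
    by_contra hc
    have := hr β (by simpa [mem_support_iff] using hc)
    rw [hβ] at this
    exact lt_irrefl _ this
  have hW : W w (p + r) = (c : WithBot ℝ) := by
    refine le_antisymm ?_ ?_
    · rw [W_le_iff]
      intro α hα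
      rw [mem_support_iff, coeff_add] at hα
      by_cases hpα : coeff α p = 0
      · have hrα : coeff α r ≠ 0 := by intro h; apply hα; rw [hpα, h, add_zero]
        exact le_of_lt (hr α (by simpa [mem_support_iff] using hrα))
      · exact le_of_eq (by exact_mod_cast hp α (by simpa [mem_support_iff] using hpα))
    · obtain ⟨α, hα⟩ := p.support.nonempty_of_ne_empty
        (by simpa [MvPolynomial.support_eq_empty] using hp0)
      have hcα : wdeg w α = c := hp α hα
      have : coeff α (p + r) ≠ 0 := by
        rw [coeff_add, hcoeffr α hcα, add_zero]
        simpa [mem_support_iff] using hα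
      calc (c : WithBot ℝ) = (wdeg w α : WithBot ℝ) := by rw [hcα]
        _ ≤ _ := le_W_of_coeff w this
  refine ⟨hW, ?_⟩
  ext β
  rw [coeff_initialForm, hW]
  split_ifs with ht
  · have htc : wdeg w β = c := by exact_mod_cast ht
    rw [coeff_add, hcoeffr β htc, add_zero]
  · by_contra hc
    have hβ : β ∈ p.support := by
      rw [mem_support_iff]; intro h; exact hc h.symm
    exact ht (by exact_mod_cast hp β hβ)

lemma W_lt_of_supp_lt {f : MvPolynomial (Fin n) R} {c : ℝ}
    (h : ∀ α ∈ f.support, (wdeg w α : WithBot ℝ) < (c : WithBot ℝ)) :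
    W w f < (c : WithBot ℝ) := by
  rw [W, Finset.sup_lt_iff (by exact bot_lt_iff_ne_bot.2 (by simp))]
  exact h

/-- Decomposition `f = In f + (f - In f)`, with the lower part having smaller weights. -/
lemma initialForm_add_sub (f : MvPolynomial (Fin n) R) :
    initialForm w f + (f - initialForm w f) = f := by ring

lemma wdeg_initialForm_eq {f : MvPolynomial (Fin n) R} {c : ℝ} (hW : W w f = (c : WithBot ℝ))
    {α} (h : α ∈ (initialForm w f).support) : wdeg w α = c := by
  have := wdeg_of_mem_initialForm w h
  rw [hW] at this
  exact_mod_cast this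

/-- Addition, case `W g < W f`. -/
lemma initialForm_add_right_lower {f g : MvPolynomial (Fin n) R}
    (hf : f ≠ 0) (h : W w g < W w f) :
    W w (f + g) = W w f ∧ initialForm w (f + g) = initialForm w f := by
  obtain ⟨c, hc⟩ : ∃ c : ℝ, W w f = (c : WithBot ℝ) := by
    obtain ⟨α, _, hα⟩ := exists_wdeg_eq_W w hf
    exact ⟨wdeg w α, hα.symm⟩
  have hdec : f + g = initialForm w f + ((f - initialForm w f) + g) := by ring
  rw [hdec, hc]
  refine initialForm_add_of_lower w (initialForm_ne_zero w hf)
    (fun α hα => wdeg_initialForm_eq w hc hα) ?_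
  intro α hα
  have := MvPolynomial.support_add (p := f - initialForm w f) (q := g) hα
  rw [Finset.mem_union] at this
  rcases this with h1 | h2
  · have := supp_sub_initialForm w h1; rwa [hc] at this
  · exact lt_of_le_of_lt (le_W_of_mem w h2) (by rwa [hc] at h)

/-- Addition, equal weights, no cancellation. -/
lemma initialForm_add_eq_weight {f g : MvPolynomial (Fin n) R} {c : ℝ}
    (hWf : W w f = (c : WithBot ℝ)) (hWg : W w g = (c : WithBot ℝ))
    (hs : initialForm w f + initialForm w g ≠ 0) :
    W w (f + g) = (c : WithBot ℝ) ∧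
      initialForm w (f + g) = initialForm w f + initialForm w g := by
  have hdec : f + g = (initialForm w f + initialForm w g)
      + ((f - initialForm w f) + (g - initialForm w g)) := by ring
  rw [hdec]
  refine initialForm_add_of_lower w hs ?_ ?_
  · intro α hα
    have := MvPolynomial.support_add (p := initialForm w f) (q := initialForm w g) hα
    rw [Finset.mem_union] at this
    rcases this with h1 | h1
    · exact wdeg_initialForm_eq w hWf h1
    · exact wdeg_initialForm_eq w hWg h1
  · intro α hα
    have := MvPolynomial.support_add (p := f - initialForm w f) (q := g - initialForm w g) hα
    rw [Finset.mem_union] at this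
    rcases this with h1 | h1
    · have := supp_sub_initialForm w h1; rwa [hWf] at this
    · have := supp_sub_initialForm w h1; rwa [hWg] at this

/-- Addition, equal weights, full cancellation: weight drops. -/
lemma W_add_lt_of_cancel {f g : MvPolynomial (Fin n) R} {c : ℝ}
    (hWf : W w f = (c : WithBot ℝ)) (hWg : W w g = (c : WithBot ℝ))
    (hs : initialForm w f + initialForm w g = 0) :
    W w (f + g) < (c : WithBot ℝ) := by
  have hdec : f + g = (f - initialForm w f) + (g - initialForm w g) := by
    have : initialForm w f = - initialForm w g := by linear_combination hs
    rw [this]; ring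
  rw [hdec]
  apply W_lt_of_supp_lt
  intro α hα
  have := MvPolynomial.support_add (p := f - initialForm w f) (q := g - initialForm w g) hα
  rw [Finset.mem_union] at this
  rcases this with h1 | h1
  · have := supp_sub_initialForm w h1; rwa [hWf] at this
  · have := supp_sub_initialForm w h1; rwa [hWg] at this

end InitialAux
end Chunk2
section Chunk3
namespace InitialAux

variable {n : ℕ} (w : Fin n → ℝ) {R : Type*} [CommRing R]

lemma wdeg_of_mem_mul {p q f : MvPolynomial (Fin n) R} {a b : ℝ}
    (hp : ∀ α ∈ p.support, (wdeg w α : WithBot ℝ) ≤ (a : WithBot ℝ))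
    (hq : ∀ α ∈ q.support, (wdeg w α : WithBot ℝ) ≤ (b : WithBot ℝ))
    {α} (hα : α ∈ (p * q).support) : (wdeg w α : WithBot ℝ) ≤ ((a + b : ℝ) : WithBot ℝ) := by
  have := MvPolynomial.support_mul p q hα
  rw [Finset.mem_add] at this
  obtain ⟨β, hβ, γ, hγ, rfl⟩ := this
  have h1 := hp β hβ
  have h2 := hq γ hγ
  rw [wdeg_add]
  push_cast at h1 h2 ⊢
  exact add_le_add h1 h2

variable [NoZeroDivisors R] in
lemma initialForm_mul {f g : MvPolynomial (Fin n) R} (hf : f ≠ 0) (hg : g ≠ 0) :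
    W w (f * g) = W w f + W w g ∧
      initialForm w (f * g) = initialForm w f * initialForm w g := by
  obtain ⟨a, ha⟩ : ∃ a : ℝ, W w f = (a : WithBot ℝ) := by
    obtain ⟨α, _, hα⟩ := exists_wdeg_eq_W w hf; exact ⟨_, hα.symm⟩
  obtain ⟨b, hb⟩ : ∃ b : ℝ, W w g = (b : WithBot ℝ) := by
    obtain ⟨α, _, hα⟩ := exists_wdeg_eq_W w hg; exact ⟨_, hα.symm⟩
  set F := initialForm w f with hF
  set G := initialForm w g with hG
  have hFne : F ≠ 0 := initialForm_ne_zero w hf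
  have hGne : G ≠ 0 := initialForm_ne_zero w hg
  have hFGne : F * G ≠ 0 := mul_ne_zero hFne hGne
  have hFw : ∀ α ∈ F.support, wdeg w α = a := fun α h => wdeg_initialForm_eq w ha h
  have hGw : ∀ α ∈ G.support, wdeg w α = b := fun α h => wdeg_initialForm_eq w hb h
  have htop : ∀ α ∈ (F * G).support, wdeg w α = a + b := by
    intro α hα
    have := MvPolynomial.support_mul F G hα
    rw [Finset.mem_add] at this
    obtain ⟨β, hβ, γ, hγ, rfl⟩ := this
    rw [wdeg_add, hFw β hβ, hGw γ hγ]
  have hdec : f * g = F * G + ((f - F) * g + F * (g - G)) := by ring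
  have hlow : ∀ α ∈ ((f - F) * g + F * (g - G)).support,
      (wdeg w α : WithBot ℝ) < ((a + b : ℝ) : WithBot ℝ) := by
    intro α hα
    have := MvPolynomial.support_add (p := (f - F) * g) (q := F * (g - G)) hα
    rw [Finset.mem_union] at this
    rcases this with h1 | h1
    · have := MvPolynomial.support_mul (f - F) g h1
      rw [Finset.mem_add] at this
      obtain ⟨β, hβ, γ, hγ, rfl⟩ := this
      have h2 : (wdeg w β : WithBot ℝ) < (a : WithBot ℝ) := by
        have := supp_sub_initialForm w hβ; rwa [ha] at this
      have h3 : (wdeg w γ : WithBot ℝ) ≤ (b : WithBot ℝ) := by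
        have := le_W_of_mem w hγ; rwa [hb] at this
      have h2' : wdeg w β < a := by exact_mod_cast h2
      have h3' : wdeg w γ ≤ b := by exact_mod_cast h3
      rw [wdeg_add]
      exact_mod_cast add_lt_add_of_lt_of_le h2' h3'
    · have := MvPolynomial.support_mul F (g - G) h1
      rw [Finset.mem_add] at this
      obtain ⟨β, hβ, γ, hγ, rfl⟩ := this
      have h2 : wdeg w β = a := hFw β hβ
      have h3 : (wdeg w γ : WithBot ℝ) < (b : WithBot ℝ) := by
        have := supp_sub_initialForm w hγ; rwa [hb] at this
      have h3' : wdeg w γ < b := by exact_mod_cast h3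
      rw [wdeg_add, h2]
      exact_mod_cast add_lt_add_of_le_of_lt (le_refl a) h3'
  rw [hdec]
  have := initialForm_add_of_lower w hFGne htop hlow
  rw [ha, hb]
  refine ⟨?_, this.2⟩
  rw [this.1]
  norm_cast

end InitialAux
end Chunk3
section Chunk4
namespace InitialAux

variable {n : ℕ} (w : Fin n → ℝ) {R : Type*} [CommRing R]

lemma degree_add' (α β : Fin n →₀ ℕ) :
    Finsupp.degree (α + β) = Finsupp.degree α + Finsupp.degree β := by
  simp [Finsupp.degree_eq_weight_one, map_add]

lemma mem_initialIdeal_of_mem {I : Ideal (MvPolynomial (Fin n) R)}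
    {f : MvPolynomial (Fin n) R} (hf : f ∈ I) : initialForm w f ∈ initialIdeal w I :=
  Ideal.subset_span ⟨f, hf, rfl⟩

lemma initialIdeal_mono {I I' : Ideal (MvPolynomial (Fin n) R)} (h : I ≤ I') :
    initialIdeal w I ≤ initialIdeal w I' := by
  apply Ideal.span_mono
  rintro g ⟨f, hf, rfl⟩
  exact ⟨f, h hf, rfl⟩

lemma W_homogeneousComponent_le (f : MvPolynomial (Fin n) R) (e : ℕ) :
    W w (homogeneousComponent e f) ≤ W w f := by
  apply W_mono
  intro α hα
  rw [mem_support_iff, coeff_homogeneousComponent] at hα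
  rw [mem_support_iff]
  intro hc; apply hα; split_ifs <;> simp [hc]

/-- Homogeneous component of an initial form. -/
lemma homogeneousComponent_initialForm (f : MvPolynomial (Fin n) R) (e : ℕ) :
    homogeneousComponent e (initialForm w f) =
      if W w (homogeneousComponent e f) = W w f then
        initialForm w (homogeneousComponent e f) else 0 := by
  have hWle := W_homogeneousComponent_le w f e
  split_ifs with hA
  · ext β
    rw [coeff_homogeneousComponent, coeff_initialForm, coeff_initialForm,
      coeff_homogeneousComponent, hA]
    by_cases h1 : Finsupp.degree β = e <;>
      by_cases h2 : (wdeg w β : WithBot ℝ) = W w f <;> simp [h1, h2]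
  · ext β
    rw [coeff_homogeneousComponent, coeff_initialForm, coeff_zero]
    by_cases h1 : Finsupp.degree β = e
    · rw [if_pos h1]
      split_ifs with h2
      · by_contra hc
        have hβ : β ∈ (homogeneousComponent e f).support := by
          rw [mem_support_iff, coeff_homogeneousComponent, if_pos h1]
          exact hc
        have hle := le_W_of_mem w hβ
        rw [h2] at hle
        exact hA (le_antisymm hWle hle)
      · rfl
    · rw [if_neg h1]

/-- The set of initial forms of homogeneous elements of `J`. -/
def homGens (J : Ideal (MvPolynomial (Fin n) R)) : Set (MvPolynomial (Fin n) R) :=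
  {g | ∃ f ∈ J, (∃ d, f.IsHomogeneous d) ∧ g = initialForm w f}

lemma initialIdeal_eq_span_homGens {J : Ideal (MvPolynomial (Fin n) R)}
    (hJhom : ∀ f ∈ J, ∀ d : ℕ, homogeneousComponent d f ∈ J) :
    initialIdeal w J = Ideal.span (homGens w J) := by
  apply le_antisymm
  · apply Ideal.span_le.2
    rintro g ⟨f, hf, rfl⟩
    have : initialForm w f =
        ∑ e ∈ Finset.range ((initialForm w f).totalDegree + 1),
          homogeneousComponent e (initialForm w f) :=
      (sum_homogeneousComponent _).symm
    rw [this]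
    apply Ideal.sum_mem
    intro e _
    rw [homogeneousComponent_initialForm]
    split_ifs with h
    · exact Ideal.subset_span
        ⟨homogeneousComponent e f, hJhom f hf e,
          ⟨e, homogeneousComponent_isHomogeneous e f⟩, rfl⟩
    · exact Ideal.zero_mem _
  · apply Ideal.span_le.2
    rintro g ⟨f, hf, _, rfl⟩
    exact mem_initialIdeal_of_mem w hf

lemma initialForm_isHomogeneous {f : MvPolynomial (Fin n) R} {d : ℕ}
    (hf : f.IsHomogeneous d) : (initialForm w f).IsHomogeneous d := by
  intro α hα
  apply hf
  have := support_initialForm_subset w f (by rwa [mem_support_iff] : α ∈ (initialForm w f).support)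
  rwa [mem_support_iff] at this

/-- Component of a product with a homogeneous polynomial. -/
lemma homogeneousComponent_mul_homog {s q : MvPolynomial (Fin n) R} {d : ℕ}
    (hs : s.IsHomogeneous d) (e : ℕ) :
    homogeneousComponent e (s * q) =
      if h : d ≤ e then s * homogeneousComponent (e - d) q else 0 := by
  split_ifs with h
  · ext β
    rw [coeff_homogeneousComponent, coeff_mul, coeff_mul]
    by_cases h1 : Finsupp.degree β = e
    · rw [if_pos h1]
      apply Finset.sum_congr rfl
      rintro ⟨γ, δ⟩ hγδ
      rw [Finset.HasAntidiagonal.mem_antidiagonal] at hγδ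
      by_cases hγ : coeff γ s = 0
      · simp [hγ]
      · have hdγ : Finsupp.degree γ = d := by
          rw [Finsupp.degree_eq_weight_one]; exact hs (by simpa using hγ)
        have hδ : Finsupp.degree δ = e - d := by
          have : Finsupp.degree γ + Finsupp.degree δ = e := by
            rw [← degree_add', hγδ, h1]
          omega
        rw [coeff_homogeneousComponent, if_pos hδ]
    · rw [if_neg h1]
      symm
      apply Finset.sum_eq_zero
      rintro ⟨γ, δ⟩ hγδ
      rw [Finset.HasAntidiagonal.mem_antidiagonal] at hγδ
      by_cases hγ : coeff γ s = 0
      · simp [hγ]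
      · have hdγ : Finsupp.degree γ = d := by
          rw [Finsupp.degree_eq_weight_one]; exact hs (by simpa using hγ)
        rw [coeff_homogeneousComponent]
        split_ifs with h2
        · exfalso
          apply h1
          rw [← hγδ, degree_add', hdγ, h2]
          omega
        · ring
  · ext β
    rw [coeff_homogeneousComponent, coeff_zero]
    split_ifs with h1
    · rw [coeff_mul]
      apply Finset.sum_eq_zero
      rintro ⟨γ, δ⟩ hγδ
      rw [Finset.HasAntidiagonal.mem_antidiagonal] at hγδ
      by_cases hγ : coeff γ s = 0
      · simp [hγ]
      · have hdγ : Finsupp.degree γ = d := by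
          rw [Finsupp.degree_eq_weight_one]; exact hs (by simpa using hγ)
        exfalso
        have : Finsupp.degree γ + Finsupp.degree δ = e := by rw [← degree_add', hγδ, h1]
        omega
    · rfl

/-- The initial ideal of a (componentwise) homogeneous ideal is homogeneous. -/
lemma homogeneousComponent_mem_initialIdeal {J : Ideal (MvPolynomial (Fin n) R)}
    (hJhom : ∀ f ∈ J, ∀ d : ℕ, homogeneousComponent d f ∈ J)
    {p : MvPolynomial (Fin n) R} (hp : p ∈ initialIdeal w J) (e : ℕ) :
    homogeneousComponent e p ∈ initialIdeal w J := by
  rw [initialIdeal_eq_span_homGens w hJhom] at hp ⊢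
  rw [Ideal.span, Submodule.mem_span_set] at hp
  obtain ⟨c, hsupp, rfl⟩ := hp
  rw [Finsupp.sum, map_sum]
  apply Ideal.sum_mem
  intro s hs
  obtain ⟨f, hfJ, ⟨d, hd⟩, hsf⟩ := hsupp hs
  rw [smul_eq_mul, mul_comm, homogeneousComponent_mul_homog (hsf ▸ initialForm_isHomogeneous w hd)]
  split_ifs with h
  · exact Ideal.mul_mem_right _ _ (Ideal.subset_span ⟨f, hfJ, ⟨d, hd⟩, hsf⟩)
  · exact Ideal.zero_mem _

end InitialAux
end Chunk4
section Chunk5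
namespace InitialAux

variable {n : ℕ} (w : Fin n → ℝ) {R : Type*} [CommRing R]

/-- Projection onto the monomials satisfying `P`. -/
def proj (P : (Fin n →₀ ℕ) → Prop) (f : MvPolynomial (Fin n) R) : MvPolynomial (Fin n) R :=
  ∑ α ∈ f.support.filter P, monomial α (coeff α f)

lemma coeff_proj (P : (Fin n →₀ ℕ) → Prop) (f : MvPolynomial (Fin n) R) (β) :
    coeff β (proj P f) = if P β then coeff β f else 0 := by
  rw [proj, coeff_sum]
  simp only [coeff_monomial]
  by_cases hβ : β ∈ f.support.filter P
  · rw [Finset.sum_eq_single_of_mem β hβ (fun b _ hb => by simp [hb])]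
    rw [Finset.mem_filter] at hβ
    simp [hβ.2]
  · rw [Finset.sum_eq_zero (fun b hb => ?_)]
    · rw [Finset.mem_filter] at hβ
      split_ifs with h
      · by_cases hs : β ∈ f.support
        · exact absurd ⟨hs, h⟩ hβ
        · rw [MvPolynomial.notMem_support_iff] at hs; exact hs.symm
      · rfl
    · rcases eq_or_ne b β with rfl | hne
      · exact absurd hb hβ
      · simp [hne]

lemma proj_add (P : (Fin n →₀ ℕ) → Prop) (f g : MvPolynomial (Fin n) R) :
    proj P (f + g) = proj P f + proj P g := by
  ext β
  simp only [coeff_add, coeff_proj]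
  split_ifs <;> simp

@[simp] lemma proj_zero (P : (Fin n →₀ ℕ) → Prop) :
    proj P (0 : MvPolynomial (Fin n) R) = 0 := by
  ext β; rw [coeff_proj]; simp

lemma proj_sum (P : (Fin n →₀ ℕ) → Prop) {ι : Type*} (s : Finset ι)
    (F : ι → MvPolynomial (Fin n) R) :
    proj P (∑ i ∈ s, F i) = ∑ i ∈ s, proj P (F i) := by
  classical
  induction s using Finset.induction with
  | empty => simp
  | insert a s' hne ih => rw [Finset.sum_insert hne, proj_add, ih, Finset.sum_insert hne]

lemma proj_eq_self (P : (Fin n →₀ ℕ) → Prop) {f : MvPolynomial (Fin n) R}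
    (h : ∀ α ∈ f.support, P α) : proj P f = f := by
  ext β
  rw [coeff_proj]
  split_ifs with hP
  · rfl
  · by_cases hs : β ∈ f.support
    · exact absurd (h β hs) hP
    · rw [MvPolynomial.notMem_support_iff] at hs; exact hs.symm

lemma proj_eq_zero (P : (Fin n →₀ ℕ) → Prop) {f : MvPolynomial (Fin n) R}
    (h : ∀ α ∈ f.support, ¬ P α) : proj P f = 0 := by
  ext β
  rw [coeff_proj, coeff_zero]
  split_ifs with hP
  · by_cases hs : β ∈ f.support
    · exact absurd hP (h β hs)
    · rwa [MvPolynomial.notMem_support_iff] at hs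
  · rfl

lemma exists_mem_support_of_mem_support_sum {ι : Type*} {s : Finset ι}
    {F : ι → MvPolynomial (Fin n) R} {α}
    (h : α ∈ (∑ i ∈ s, F i).support) : ∃ i ∈ s, α ∈ (F i).support := by
  by_contra hc
  push_neg at hc
  rw [mem_support_iff, coeff_sum] at h
  exact h (Finset.sum_eq_zero fun i hi => by
    have := hc i hi; rwa [MvPolynomial.notMem_support_iff] at this)

/-- The target set for the projection argument. -/
def Wset (J : Ideal (MvPolynomial (Fin n) R)) (c : ℝ) (e : ℕ) :
    Set (MvPolynomial (Fin n) R) :=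
  {q | ∃ g ∈ J, g.IsHomogeneous e ∧
    ∀ α ∈ (g - q).support, (wdeg w α : WithBot ℝ) < (c : WithBot ℝ)}

lemma zero_mem_Wset (J : Ideal (MvPolynomial (Fin n) R)) (c : ℝ) (e : ℕ) :
    (0 : MvPolynomial (Fin n) R) ∈ Wset w J c e :=
  ⟨0, J.zero_mem, isHomogeneous_zero _ _ _, by simp⟩

lemma add_mem_Wset {J : Ideal (MvPolynomial (Fin n) R)} {c : ℝ} {e : ℕ}
    {q₁ q₂ : MvPolynomial (Fin n) R}
    (h1 : q₁ ∈ Wset w J c e) (h2 : q₂ ∈ Wset w J c e) : q₁ + q₂ ∈ Wset w J c e := by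
  obtain ⟨g₁, hg₁, hh₁, hl₁⟩ := h1
  obtain ⟨g₂, hg₂, hh₂, hl₂⟩ := h2
  refine ⟨g₁ + g₂, J.add_mem hg₁ hg₂, hh₁.add hh₂, ?_⟩
  intro α hα
  have heq : g₁ + g₂ - (q₁ + q₂) = (g₁ - q₁) + (g₂ - q₂) := by ring
  rw [heq] at hα
  rcases Finset.mem_union.1 (MvPolynomial.support_add hα) with h | h
  · exact hl₁ α h
  · exact hl₂ α h

lemma sum_mem_Wset {J : Ideal (MvPolynomial (Fin n) R)} {c : ℝ} {e : ℕ}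
    {ι : Type*} (s : Finset ι) (F : ι → MvPolynomial (Fin n) R)
    (h : ∀ i ∈ s, F i ∈ Wset w J c e) : (∑ i ∈ s, F i) ∈ Wset w J c e := by
  classical
  induction s using Finset.induction with
  | empty => simpa using zero_mem_Wset w J c e
  | @insert a s' hne ih =>
      rw [Finset.sum_insert hne]
      exact add_mem_Wset w (h a (Finset.mem_insert_self a s'))
        (ih fun i hi => h i (Finset.mem_insert_of_mem hi))

/-- The matching predicate. -/
def Pmatch (c : ℝ) (e : ℕ) (α : Fin n →₀ ℕ) : Prop :=
  wdeg w α = c ∧ Finsupp.degree α = e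

/-- Key step: projecting a multiple of a homogeneous generator. -/
lemma proj_monomial_mul_mem_Wset {J : Ideal (MvPolynomial (Fin n) R)} {c : ℝ} {e : ℕ}
    {f : MvPolynomial (Fin n) R} (hfJ : f ∈ J) {d : ℕ} (hf : f.IsHomogeneous d)
    (β : Fin n →₀ ℕ) (r : R) :
    proj (Pmatch w c e) (monomial β r * initialForm w f) ∈ Wset w J c e := by
  by_cases hf0 : f = 0
  · rw [hf0]; simpa using zero_mem_Wset w J c e
  obtain ⟨α₀, hα₀, hb⟩ := exists_wdeg_eq_W w hf0
  set b₀ := wdeg w α₀ with hb₀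
  set s := initialForm w f with hs
  have hssupp : ∀ α ∈ s.support, wdeg w α = b₀ := by
    intro α hα
    have := wdeg_of_mem_initialForm w hα
    rw [← hb] at this
    exact_mod_cast this
  have hsdeg : ∀ α ∈ s.support, Finsupp.degree α = d := by
    intro α hα
    rw [Finsupp.degree_eq_weight_one]
    exact initialForm_isHomogeneous w hf (by rwa [mem_support_iff] at hα)
  have hq : ∀ α ∈ (monomial β r * s).support,
      wdeg w α = wdeg w β + b₀ ∧ Finsupp.degree α = Finsupp.degree β + d := by
    intro α hα
    have := MvPolynomial.support_mul (monomial β r) s hα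
    rw [Finset.mem_add] at this
    obtain ⟨γ, hγ, δ, hδ, rfl⟩ := this
    have hγβ : γ = β := by
      have := MvPolynomial.support_monomial (s := β) (a := r) ▸ hγ
      split_ifs at this with h0
      · simp at this
      · simpa using this
    rw [hγβ]
    rw [wdeg_add, degree_add', hssupp δ hδ, hsdeg δ hδ]
    exact ⟨rfl, rfl⟩
  by_cases hmatch : wdeg w β + b₀ = c ∧ Finsupp.degree β + d = e
  · rw [proj_eq_self _ (fun α hα => by
      obtain ⟨h1, h2⟩ := hq α hα
      exact ⟨by rw [h1, hmatch.1], by rw [h2, hmatch.2]⟩)]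
    have hhom : (monomial β r * f).IsHomogeneous e := by
      have h1 : (monomial β r).IsHomogeneous (Finsupp.degree β) :=
        isHomogeneous_monomial r rfl
      have h2 := h1.mul hf
      rwa [hmatch.2] at h2
    refine ⟨monomial β r * f, Ideal.mul_mem_left _ _ hfJ, hhom, ?_⟩
    intro α hα
    have heq : monomial β r * f - monomial β r * s = monomial β r * (f - s) := by ring
    rw [heq] at hα
    have := MvPolynomial.support_mul (monomial β r) (f - s) hα
    rw [Finset.mem_add] at this
    obtain ⟨γ, hγ, δ, hδ, rfl⟩ := this
    have hγβ : γ = β := by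
      have := MvPolynomial.support_monomial (s := β) (a := r) ▸ hγ
      split_ifs at this with h0
      · simp at this
      · simpa using this
    rw [hγβ]
    have hδlt : (wdeg w δ : WithBot ℝ) < (b₀ : WithBot ℝ) := by
      have := supp_sub_initialForm w hδ
      rwa [← hb] at this
    have hδlt' : wdeg w δ < b₀ := by exact_mod_cast hδlt
    rw [wdeg_add]
    rw [← hmatch.1]
    exact_mod_cast add_lt_add_of_le_of_lt (le_refl (wdeg w β)) hδlt'
  · rw [proj_eq_zero _ (fun α hα hP => by
      obtain ⟨h1, h2⟩ := hq α hα
      exact hmatch ⟨by rw [← h1, hP.1], by rw [← h2, hP.2]⟩)]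
    exact zero_mem_Wset w J c e

lemma proj_mem_Wset {J : Ideal (MvPolynomial (Fin n) R)} {c : ℝ} {e : ℕ}
    {p : MvPolynomial (Fin n) R} (hp : p ∈ Ideal.span (homGens w J)) :
    proj (Pmatch w c e) p ∈ Wset w J c e := by
  rw [Ideal.span, Submodule.mem_span_set] at hp
  obtain ⟨co, hsupp, rfl⟩ := hp
  rw [Finsupp.sum]
  rw [proj_sum]
  apply sum_mem_Wset
  intro s hsmem
  obtain ⟨f, hfJ, ⟨d, hd⟩, hsf⟩ := hsupp hsmem
  set a := co s with ha
  rw [smul_eq_mul, hsf]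
  -- expand a into monomials
  have hexp : a * initialForm w f =
      ∑ β ∈ a.support, monomial β (coeff β a) * initialForm w f := by
    conv_lhs => rw [a.as_sum]
    rw [Finset.sum_mul]
  rw [hexp, proj_sum]
  apply sum_mem_Wset
  intro β _
  exact proj_monomial_mul_mem_Wset w hfJ hd β _

/-- A `w`-homogeneous element of the initial ideal is the initial form of an element of `J`,
of no larger total degree. -/
lemma exists_initialForm_eq {J : Ideal (MvPolynomial (Fin n) R)}
    (hJhom : ∀ f ∈ J, ∀ d : ℕ, homogeneousComponent d f ∈ J)
    {p : MvPolynomial (Fin n) R} (hp : p ∈ initialIdeal w J) (hp0 : p ≠ 0) {c : ℝ}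
    (hc : ∀ α ∈ p.support, wdeg w α = c) :
    ∃ g ∈ J, initialForm w g = p ∧ W w g = (c : WithBot ℝ) ∧
      g.totalDegree ≤ p.totalDegree := by
  rw [initialIdeal_eq_span_homGens w hJhom] at hp
  have hcomp : ∀ e : ℕ, homogeneousComponent e p = proj (Pmatch w c e) p := by
    intro e
    ext β
    rw [coeff_homogeneousComponent, coeff_proj]
    by_cases hβ : coeff β p = 0
    · rw [hβ]; split_ifs <;> rfl
    · have hwβ : wdeg w β = c := hc β (by rwa [mem_support_iff])
      by_cases hdβ : Finsupp.degree β = e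
      · rw [if_pos hdβ, if_pos ⟨hwβ, hdβ⟩]
      · rw [if_neg hdβ, if_neg (fun hP => hdβ hP.2)]
  have hmem : ∀ e : ℕ, homogeneousComponent e p ∈ Wset w J c e := by
    intro e
    rw [hcomp e]
    exact proj_mem_Wset w hp
  choose g hgJ hghom hglow using hmem
  set T := p.totalDegree with hT
  set G := ∑ e ∈ Finset.range (T + 1), g e with hG
  have hsum : ∑ e ∈ Finset.range (T + 1), homogeneousComponent e p = p :=
    sum_homogeneousComponent p
  have hdiff : G - p = ∑ e ∈ Finset.range (T + 1), (g e - homogeneousComponent e p) := by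
    rw [Finset.sum_sub_distrib, hsum]
  have hlow : ∀ α ∈ (G - p).support, (wdeg w α : WithBot ℝ) < (c : WithBot ℝ) := by
    rw [hdiff]
    intro α hα
    obtain ⟨e, _, hαe⟩ := exists_mem_support_of_mem_support_sum hα
    exact hglow e α hαe
  have hpr := initialForm_add_of_lower w hp0 hc hlow
  have hGeq : p + (G - p) = G := by ring
  rw [hGeq] at hpr
  refine ⟨G, hG ▸ Ideal.sum_mem _ (fun e _ => hgJ e), hpr.2, hpr.1, ?_⟩
  calc G.totalDegree ≤ (Finset.range (T + 1)).sup (fun e => (g e).totalDegree) :=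
        totalDegree_finset_sum _ _
    _ ≤ T := Finset.sup_le (fun e he => le_trans (hghom e).totalDegree_le
        (by rw [Finset.mem_range] at he; omega))

end InitialAux
end Chunk5
section Chunk6
namespace InitialAux

variable {n : ℕ} (w : Fin n → ℝ) {R : Type*} [CommRing R]

lemma initialForm_eq_self {f : MvPolynomial (Fin n) R}
    (h : ∀ α ∈ f.support, (wdeg w α : WithBot ℝ) = W w f) : initialForm w f = f := by
  ext β
  rw [coeff_initialForm]
  split_ifs with ht
  · rfl
  · by_cases hs : β ∈ f.support
    · exact absurd (h β hs) ht
    · rw [MvPolynomial.notMem_support_iff] at hs; exact hs.symm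

variable [Nontrivial R]

lemma W_C_neg_one : W w (C (-1) : MvPolynomial (Fin n) R) = ((0 : ℝ) : WithBot ℝ) := by
  rw [W, MvPolynomial.C_apply, MvPolynomial.support_monomial, if_neg (by simp : ¬(-1 : R) = 0)]
  simp [wdeg_zero]

lemma initialForm_C_neg_one : initialForm w (C (-1) : MvPolynomial (Fin n) R) = C (-1) := by
  apply initialForm_eq_self
  intro α hα
  rw [MvPolynomial.C_apply, MvPolynomial.support_monomial, if_neg (by simp : ¬(-1 : R) = 0), Finset.mem_singleton] at hα
  rw [hα, W_C_neg_one, wdeg_zero]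

lemma coeff_zero_initialForm_of_homog {l : MvPolynomial (Fin n) R} (hl : l.IsHomogeneous 1) :
    coeff 0 (initialForm w l) = 0 := by
  rw [coeff_initialForm]
  have h0 : coeff 0 l = 0 := hl.coeff_eq_zero (by simp [map_zero])
  split_ifs <;> simp [h0]

lemma initialForm_neg (f : MvPolynomial (Fin n) R) :
    W w (-f) = W w f ∧ initialForm w (-f) = - initialForm w f := by
  have hW : W w (-f) = W w f := by rw [W, W, MvPolynomial.support_neg]
  refine ⟨hW, ?_⟩
  ext β
  rw [coeff_initialForm, coeff_neg, coeff_neg, coeff_initialForm, hW]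
  split_ifs <;> simp

/-- sub_one decomposition: `l - 1 = C (-1) + l`. -/
lemma sub_one_eq (l : MvPolynomial (Fin n) R) : l - 1 = C (-1) + l := by
  rw [map_neg, map_one]; ring

lemma sub_one_ne_zero {l : MvPolynomial (Fin n) R} (hl : l.IsHomogeneous 1) :
    l - 1 ≠ 0 := by
  intro h
  have : coeff 0 (l - 1) = 0 := by rw [h]; simp
  rw [coeff_sub, hl.coeff_eq_zero (by simp [map_zero])] at this
  simp at this

/-- Case `W l < 0`: the initial form of `l - 1` is the constant `-1`. -/
lemma initialForm_sub_one_of_lt {l : MvPolynomial (Fin n) R}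
    (h : W w l < ((0:ℝ) : WithBot ℝ)) :
    W w (l - 1) = ((0:ℝ) : WithBot ℝ) ∧ initialForm w (l - 1) = C (-1) := by
  rw [sub_one_eq]
  have := initialForm_add_right_lower w (f := (C (-1) : MvPolynomial (Fin n) R)) (g := l)
    (by intro hc; exact absurd hc (by simp)) (by rw [W_C_neg_one]; exact h)
  rw [W_C_neg_one, initialForm_C_neg_one] at this
  exact this

/-- Case `W l = 0`. -/
lemma initialForm_sub_one_of_eq {l : MvPolynomial (Fin n) R} (hl : l.IsHomogeneous 1)
    (h : W w l = ((0:ℝ) : WithBot ℝ)) :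
    W w (l - 1) = ((0:ℝ) : WithBot ℝ) ∧
      initialForm w (l - 1) = C (-1) + initialForm w l := by
  rw [sub_one_eq]
  have hs : initialForm w (C (-1) : MvPolynomial (Fin n) R) + initialForm w l ≠ 0 := by
    rw [initialForm_C_neg_one]
    intro hc
    have : coeff 0 (C (-1) + initialForm w l : MvPolynomial (Fin n) R) = 0 := by rw [hc]; simp
    rw [coeff_add, coeff_zero_initialForm_of_homog w hl] at this
    simp at this
  have := initialForm_add_eq_weight w (W_C_neg_one w) h hs
  rwa [initialForm_C_neg_one] at this

/-- Case `W l > 0`. -/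
lemma initialForm_sub_one_of_gt {l : MvPolynomial (Fin n) R}
    (h : ((0:ℝ) : WithBot ℝ) < W w l) :
    W w (l - 1) = W w l ∧ initialForm w (l - 1) = initialForm w l := by
  have hl0 : l ≠ 0 := by
    intro hc; rw [hc] at h; simp at h
  have : l - 1 = l + C (-1) := by rw [map_neg, map_one]; ring
  rw [this]
  exact initialForm_add_right_lower w hl0 (by rw [W_C_neg_one]; exact h)

end InitialAux
end Chunk6
section Chunk7
namespace InitialAux

variable {n : ℕ} (w : Fin (n + 1) → ℝ)
variable (J : Ideal (MvPolynomial (Fin (n + 1)) ℂ))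
variable (l : MvPolynomial (Fin (n + 1)) ℂ)

/-- The key reduction hypothesis: multiplication by `In (l-1)` detects membership. -/
lemma H_lemma
    (hJhom : ∀ f ∈ J, ∀ d : ℕ, homogeneousComponent d f ∈ J)
    (hl : l.IsHomogeneous 1)
    (hnzd : Ideal.Quotient.mk (initialIdeal w J) (initialForm w l) ∈
      nonZeroDivisors (MvPolynomial (Fin (n + 1)) ℂ ⧸ initialIdeal w J)) :
    ∀ z, initialForm w (l - 1) * z ∈ initialIdeal w J → z ∈ initialIdeal w J := by
  intro z hz
  rcases lt_trichotomy (W w l) (((0:ℝ)) : WithBot ℝ) with hlt | heq | hgt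
  · rw [(initialForm_sub_one_of_lt w hlt).2] at hz
    have : z = (-1) * (C (-1) * z) := by
      rw [map_neg, map_one]; ring
    rw [this]
    exact Ideal.mul_mem_left _ _ hz
  · rw [(initialForm_sub_one_of_eq w hl heq).2] at hz
    set a := initialForm w l with ha
    have hahom : a.IsHomogeneous 1 := initialForm_isHomogeneous w hl
    have hz' : a * z - z ∈ initialIdeal w J := by
      have : a * z - z = (C (-1) + a) * z := by rw [map_neg, map_one]; ring
      rw [this]; exact hz
    -- degree components of z are in the initial ideal, by induction
    have hcomp : ∀ e : ℕ, homogeneousComponent e z ∈ initialIdeal w J := by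
      intro e
      induction e using Nat.strong_induction_on with
      | _ e ih =>
        have hmem := homogeneousComponent_mem_initialIdeal w hJhom hz' e
        rw [map_sub, homogeneousComponent_mul_homog hahom] at hmem
        match e with
        | 0 =>
          rw [dif_neg (by omega)] at hmem
          have : homogeneousComponent 0 z = -(0 - homogeneousComponent 0 z) := by ring
          rw [this]
          exact (initialIdeal w J).neg_mem hmem
        | Nat.succ e' =>
          rw [dif_pos (by omega)] at hmem
          have h1 : a * homogeneousComponent (e' + 1 - 1) z ∈ initialIdeal w J :=
            Ideal.mul_mem_left _ _ (by simpa using ih e' (by omega))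
          have : homogeneousComponent (e' + 1) z =
              -((a * homogeneousComponent (e' + 1 - 1) z - homogeneousComponent (e' + 1) z)
                - a * homogeneousComponent (e' + 1 - 1) z) := by ring
          rw [this]
          exact (initialIdeal w J).neg_mem (Ideal.sub_mem _ hmem h1)
    have : z = ∑ e ∈ Finset.range (z.totalDegree + 1), homogeneousComponent e z :=
      (sum_homogeneousComponent z).symm
    rw [this]
    exact Ideal.sum_mem _ (fun e _ => hcomp e)
  · rw [(initialForm_sub_one_of_gt w hgt).2] at hz
    have h0 : Ideal.Quotient.mk (initialIdeal w J) z *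
        Ideal.Quotient.mk (initialIdeal w J) (initialForm w l) = 0 := by
      rw [← map_mul, mul_comm, Ideal.Quotient.eq_zero_iff_mem]
      exact hz
    have := hnzd.2 _ h0
    rwa [Ideal.Quotient.eq_zero_iff_mem] at this

end InitialAux
end Chunk7
section Chunk8
namespace InitialAux

variable {n : ℕ} (w : Fin (n + 1) → ℝ)

lemma totalDegree_initialForm_le (h : MvPolynomial (Fin (n + 1)) ℂ) :
    (initialForm w h).totalDegree ≤ h.totalDegree :=
  Finset.sup_mono (support_initialForm_subset w h)

/-- The universe of exponents of coordinatewise size at most `T`. -/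
def U (T : ℕ) : Finset (Fin (n + 1) →₀ ℕ) :=
  Finset.Iic (Finsupp.equivFunOnFinite.symm (fun _ => T))

lemma mem_U_of_support {T : ℕ} {h : MvPolynomial (Fin (n + 1)) ℂ} {α}
    (hα : α ∈ h.support) (hT : h.totalDegree ≤ T) : α ∈ (U T : Finset (Fin (n+1) →₀ ℕ)) := by
  rw [U, Finset.mem_Iic]
  rw [Finsupp.le_def]
  intro i
  have h1 : α i ≤ α.sum (fun _ e => e) := by
    by_cases hi : α i = 0
    · simp [hi]
    · exact Finset.single_le_sum (f := fun j => α j) (fun _ _ => Nat.zero_le _)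
        (Finsupp.mem_support_iff.2 hi)
  have h2 : α.sum (fun _ e => e) ≤ h.totalDegree := Finset.le_sup (f := fun s : Fin (n+1) →₀ ℕ => s.sum fun _ e => e) hα
  have : (Finsupp.equivFunOnFinite.symm (fun _ => T) : Fin (n+1) →₀ ℕ) i = T := by
    simp [Finsupp.equivFunOnFinite]
  rw [this]
  omega

variable (J : Ideal (MvPolynomial (Fin (n + 1)) ℂ))
variable (l : MvPolynomial (Fin (n + 1)) ℂ)

lemma descent
    (hJhom : ∀ f ∈ J, ∀ d : ℕ, homogeneousComponent d f ∈ J)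
    (hl : l.IsHomogeneous 1)
    (H : ∀ z, initialForm w (l - 1) * z ∈ initialIdeal w J → z ∈ initialIdeal w J) :
    ∀ (T μ : ℕ) (g h : MvPolynomial (Fin (n + 1)) ℂ), g ∈ J → h.totalDegree ≤ T →
      (((U T : Finset (Fin (n+1) →₀ ℕ))).filter
        (fun α => (wdeg w α : WithBot ℝ) ≤ W w h)).card < μ →
      initialForm w (g + h * (l - 1)) ∈
        initialIdeal w J ⊔ Ideal.span {initialForm w (l - 1)} := by
  intro T μ
  induction μ with
  | zero => intro g h _ _ hcard; omega
  | succ μ ih =>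
    intro g h hg hT hcard
    by_cases hh : h = 0
    · rw [hh, zero_mul, add_zero]
      exact Submodule.mem_sup_left (mem_initialIdeal_of_mem w hg)
    have hl1 : l - 1 ≠ 0 := sub_one_ne_zero hl
    have hA : h * (l - 1) ≠ 0 := mul_ne_zero hh hl1
    have hmul := initialForm_mul w hh hl1
    by_cases hg0 : g = 0
    · rw [hg0, zero_add, hmul.2]
      exact Submodule.mem_sup_right (Ideal.mem_span_singleton'.2 ⟨initialForm w h, rfl⟩)
    obtain ⟨αg, _, hαg⟩ := exists_wdeg_eq_W w hg0
    obtain ⟨αh, hαhs, hαh⟩ := exists_wdeg_eq_W w hh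
    have hcg : W w g = ((wdeg w αg : ℝ) : WithBot ℝ) := hαg.symm
    have hWh : W w h = ((wdeg w αh : ℝ) : WithBot ℝ) := hαh.symm
    rcases lt_trichotomy (W w g) (W w (h * (l - 1))) with hlt | heqW | hgt
    · have hstep := initialForm_add_right_lower w (f := h * (l - 1)) (g := g) hA hlt
      have hcomm : g + h * (l - 1) = h * (l - 1) + g := by ring
      rw [hcomm, hstep.2, hmul.2]
      exact Submodule.mem_sup_right (Ideal.mem_span_singleton'.2 ⟨initialForm w h, rfl⟩)
    · have hch' : W w (h * (l - 1)) = ((wdeg w αg : ℝ) : WithBot ℝ) := by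
        rw [← heqW, hcg]
      by_cases hs0 : initialForm w g + initialForm w (h * (l - 1)) = 0
      · -- cancellation case
        have hmemg : initialForm w g ∈ initialIdeal w J := mem_initialIdeal_of_mem w hg
        have huh : initialForm w (l - 1) * initialForm w h ∈ initialIdeal w J := by
          have heq1 : initialForm w (l - 1) * initialForm w h = - initialForm w g := by
            rw [mul_comm, ← hmul.2]
            linear_combination hs0
          rw [heq1]
          exact (initialIdeal w J).neg_mem hmemg
        have hinh : initialForm w h ∈ initialIdeal w J := H _ huh
        obtain ⟨g₁, hg₁J, hg₁ini, hg₁W, hg₁deg⟩ :=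
          exists_initialForm_eq w hJhom hinh (initialForm_ne_zero w hh)
            (c := wdeg w αh) (fun α hα => wdeg_initialForm_eq w hWh hα)
        have hrepr : g + h * (l - 1) = (g + g₁ * (l - 1)) + (h - g₁) * (l - 1) := by ring
        have hg' : g + g₁ * (l - 1) ∈ J := J.add_mem hg (Ideal.mul_mem_right _ _ hg₁J)
        by_cases hh'0 : h - g₁ = 0
        · rw [hrepr, hh'0, zero_mul, add_zero]
          exact Submodule.mem_sup_left (mem_initialIdeal_of_mem w hg')
        · have hneg := initialForm_neg w g₁
          have hWneg : W w (-g₁) = ((wdeg w αh : ℝ) : WithBot ℝ) := by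
            rw [hneg.1, hg₁W]
          have hcancel : initialForm w h + initialForm w (-g₁) = 0 := by
            rw [hneg.2, hg₁ini]; ring
          have hWh' : W w (h - g₁) < ((wdeg w αh : ℝ) : WithBot ℝ) := by
            have := W_add_lt_of_cancel w hWh hWneg hcancel
            rwa [(by ring : h + (-g₁) = h - g₁)] at this
          have hTd : (h - g₁).totalDegree ≤ T := by
            have h1 : g₁.totalDegree ≤ h.totalDegree :=
              le_trans hg₁deg (totalDegree_initialForm_le w h)
            exact le_trans (totalDegree_sub h g₁) (max_le hT (le_trans h1 hT))
          -- the measure strictly decreases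
          have hssub : ((U T : Finset (Fin (n+1) →₀ ℕ))).filter
                (fun α => (wdeg w α : WithBot ℝ) ≤ W w (h - g₁)) ⊂
              ((U T : Finset (Fin (n+1) →₀ ℕ))).filter
                (fun α => (wdeg w α : WithBot ℝ) ≤ W w h) := by
            rw [Finset.ssubset_iff_of_subset]
            · refine ⟨αh, ?_, ?_⟩
              · rw [Finset.mem_filter]
                exact ⟨mem_U_of_support hαhs hT, le_of_eq hαh⟩
              · rw [Finset.mem_filter]
                rintro ⟨-, hle⟩
                exact absurd (lt_of_le_of_lt hle hWh') (lt_irrefl _)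
            · intro α hα
              rw [Finset.mem_filter] at hα ⊢
              exact ⟨hα.1, le_trans hα.2 (le_trans (le_of_lt hWh') (le_of_eq hWh.symm))⟩
          have hcard' := Finset.card_lt_card hssub
          rw [hrepr]
          exact ih (g + g₁ * (l - 1)) (h - g₁) hg' hTd (by omega)
      · have hstep := initialForm_add_eq_weight w hcg hch' hs0
        rw [hstep.2, hmul.2]
        exact Submodule.add_mem_sup (mem_initialIdeal_of_mem w hg)
          (Ideal.mem_span_singleton'.2 ⟨initialForm w h, rfl⟩)
    · have hstep := initialForm_add_right_lower w (f := g) (g := h * (l - 1)) hg0 hgt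
      rw [hstep.2]
      exact Submodule.mem_sup_left (mem_initialIdeal_of_mem w hg)

end InitialAux
end Chunk8

/-- If `In_w(ℓ)` is not a zero-divisor modulo `In_w(J)`, then
`In_w(J + ⟨ℓ − 1⟩) = In_w(J) + In_w(⟨ℓ − 1⟩)`. -/
theorem initialIdeal_sup_span_sub_one {n : ℕ}
    (J : Ideal (MvPolynomial (Fin (n + 1)) ℂ))
    (hJhom : ∀ f ∈ J, ∀ d : ℕ, homogeneousComponent d f ∈ J)
    (l : MvPolynomial (Fin (n + 1)) ℂ) (hl : l.IsHomogeneous 1)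
    (w : Fin (n + 1) → ℝ)
    (hnzd : Ideal.Quotient.mk (initialIdeal w J) (initialForm w l) ∈
      nonZeroDivisors (MvPolynomial (Fin (n + 1)) ℂ ⧸ initialIdeal w J)) :
    initialIdeal w (J + Ideal.span {l - 1}) =
      initialIdeal w J + initialIdeal w (Ideal.span {l - 1}) := by
  have H := InitialAux.H_lemma w J l hJhom hl hnzd
  have hle : initialIdeal w J ⊔ Ideal.span {initialForm w (l - 1)} ≤
      initialIdeal w J + initialIdeal w (Ideal.span {l - 1}) := by
    rw [Submodule.add_eq_sup]
    apply sup_le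
    · exact le_sup_left
    · refine le_trans ?_ le_sup_right
      rw [Ideal.span_le, Set.singleton_subset_iff]
      exact InitialAux.mem_initialIdeal_of_mem w (Ideal.mem_span_singleton_self _)
  apply le_antisymm
  · rw [initialIdeal]
    apply Ideal.span_le.2
    rintro p ⟨f, hf, rfl⟩
    by_cases hf0 : f = 0
    · rw [hf0, InitialAux.initialForm_zero]
      exact Submodule.zero_mem _
    rw [Submodule.add_eq_sup] at hf
    obtain ⟨g, hgJ, c, hcmem, rfl⟩ := Submodule.mem_sup.1 hf
    obtain ⟨h, rfl⟩ := Ideal.mem_span_singleton'.1 hcmem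
    have key := InitialAux.descent w J l hJhom hl H h.totalDegree
      ((((InitialAux.U h.totalDegree : Finset (Fin (n+1) →₀ ℕ))).filter
        (fun α => (wdeg w α : WithBot ℝ) ≤ InitialAux.W w h)).card + 1) g h hgJ le_rfl
      (Nat.lt_succ_self _)
    exact hle key
  · rw [Submodule.add_eq_sup, Submodule.add_eq_sup]
    apply sup_le
    · exact InitialAux.initialIdeal_mono w le_sup_left
    · exact InitialAux.initialIdeal_mono w le_sup_right


end
end

section
/- Suppose that no coordinate variable x_i lies in J (equivalently, the projective closure C̄ is not contained in any coordinate hyperplane), that v ∈ (ℂ*)^{n+1} satisfies the patch condition for J, and set ℓ = v_0 x_0 + … + v_n x_n. Let w ∈ ℚ^{n+1} satisfy w_i ≤ 0 for all i, w_j = 0 for some index j, and w_k ≠ 0 for some index k. Then for every point a ∈ (ℂ*)^{n+1} such that g(a) = 0 for all g ∈ In_w(J), one has In_w(ℓ)(a) ≠ 0. In particular, In_w(ℓ) is not a zero-divisor modulo the ideal generated by In_w(J) in the Laurent polynomial ring ℂ[x_0^{±1},…,x_n^{±1}]. -/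
open MvPolynomial
open scoped Classical

noncomputable section

/-- The Laurent polynomial ring in `n` variables over `R`. -/
abbrev MvLaurent (n : ℕ) (R : Type*) [CommRing R] : Type _ :=
  AddMonoidAlgebra R (Fin n →₀ ℤ)

/-- The canonical ring map from the polynomial ring to the Laurent polynomial ring. -/
def polyToLaurent {n : ℕ} {R : Type*} [CommRing R] :
    MvPolynomial (Fin n) R →+* MvLaurent n R :=
  AddMonoidAlgebra.mapDomainRingHom R
    (Finsupp.mapRange.addMonoidHom (Nat.castAddMonoidHom ℤ))

/-- `v` satisfies the patch condition for a homogeneous ideal `J ⊆ ℂ[x₀,…,xₙ]`: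
every nonzero common zero of `J` having some zero coordinate satisfies `v · a ≠ 0`. -/
def PatchCond {n : ℕ} (J : Ideal (MvPolynomial (Fin (n + 1)) ℂ)) (v : Fin (n + 1) → ℂ) : Prop :=
  ∀ a : Fin (n + 1) → ℂ, a ≠ 0 → (∀ g ∈ J, eval a g = 0) → (∃ i, a i = 0) →
    ∑ i, v i * a i ≠ 0

/-- The homogeneous vanishing ideal of the projective closure of the affine variety of `I`:
the ideal generated by all homogeneous `F` with dehomogenization `F(1,x₁,…,xₙ) ∈ I`. -/
def projClosureIdeal {n : ℕ} (I : Ideal (MvPolynomial (Fin n) ℂ)) :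
    Ideal (MvPolynomial (Fin (n + 1)) ℂ) :=
  Ideal.span {F | (∃ d, F.IsHomogeneous d) ∧
    aeval (Fin.cons (1 : MvPolynomial (Fin n) ℂ) X) F ∈ I}

lemma wdeg_nonpos {n : ℕ} {w : Fin n → ℝ} (hw : ∀ i, w i ≤ 0) (α : Fin n →₀ ℕ) :
    wdeg w α ≤ 0 :=
  Finset.sum_nonpos fun i _ => mul_nonpos_of_nonpos_of_nonneg (hw i) (Nat.cast_nonneg _)

lemma wdeg_eq_zero_iff {n : ℕ} {w : Fin n → ℝ} (hw : ∀ i, w i ≤ 0) (α : Fin n →₀ ℕ) :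
    wdeg w α = 0 ↔ ∀ i, α i ≠ 0 → w i = 0 := by
  rw [wdeg, Finset.sum_eq_zero_iff_of_nonpos
    (fun i _ => mul_nonpos_of_nonpos_of_nonneg (hw i) (Nat.cast_nonneg _))]
  constructor
  · intro h i hi
    rcases mul_eq_zero.mp (h i (Finset.mem_univ i)) with h' | h'
    · exact h'
    · exact absurd (Nat.cast_eq_zero.mp h') hi
  · intro h i _
    by_cases hi : α i = 0
    · simp [hi]
    · simp [h i hi]

lemma wdeg_single {n : ℕ} (w : Fin n → ℝ) (j : Fin n) :
    wdeg w (Finsupp.single j 1) = w j := by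
  rw [wdeg]
  rw [Finset.sum_eq_single j]
  · simp
  · intro i _ hij; simp [Finsupp.single_apply, Ne.symm hij]
  · simp

lemma eval_fillzero {n : ℕ} {w : Fin n → ℝ} (hw : ∀ i, w i ≤ 0) (a : Fin n → ℂ)
    (f : MvPolynomial (Fin n) ℂ) :
    eval (fun i => if w i = 0 then a i else 0) f =
      ∑ α ∈ f.support.filter (fun α => wdeg w α = 0), eval a (monomial α (coeff α f)) := by
  set b : Fin n → ℂ := fun i => if w i = 0 then a i else 0 with hb
  conv_lhs => rw [← f.support_sum_monomial_coeff]
  rw [map_sum, Finset.sum_filter]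
  refine Finset.sum_congr rfl fun α hα => ?_
  by_cases h0 : wdeg w α = 0
  · rw [if_pos h0, eval_monomial, eval_monomial]
    congr 1
    refine Finsupp.prod_congr fun i hi => ?_
    have : w i = 0 := (wdeg_eq_zero_iff hw α).mp h0 i (Finsupp.mem_support_iff.mp hi)
    simp [hb, this]
  · rw [if_neg h0, eval_monomial]
    rw [wdeg_eq_zero_iff hw] at h0
    push_neg at h0
    obtain ⟨i, hi, hwi⟩ := h0
    have : α.prod (fun j e => b j ^ e) = 0 := by
      refine Finset.prod_eq_zero (Finsupp.mem_support_iff.mpr hi) ?_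
      simp [hb, hwi, pow_eq_zero_iff, hi]
    rw [this, mul_zero]

lemma eval_fillzero_initial {n : ℕ} {w : Fin n → ℝ} (hw : ∀ i, w i ≤ 0) (a : Fin n → ℂ)
    (f : MvPolynomial (Fin n) ℂ) (α₀ : Fin n →₀ ℕ) (hα₀ : α₀ ∈ f.support)
    (h0 : wdeg w α₀ = 0) :
    eval (fun i => if w i = 0 then a i else 0) f = eval a (initialForm w f) := by
  rw [eval_fillzero hw, initialForm, map_sum]
  congr 1
  refine Finset.filter_congr fun α hα => ?_
  constructor
  · intro h β hβ
    rw [h]; exact wdeg_nonpos hw β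
  · intro h
    have h1 := h α₀ hα₀
    rw [h0] at h1
    exact le_antisymm (wdeg_nonpos hw α) h1

lemma eval_fillzero_zero {n : ℕ} {w : Fin n → ℝ} (hw : ∀ i, w i ≤ 0) (a : Fin n → ℂ)
    (f : MvPolynomial (Fin n) ℂ) (h : ∀ α ∈ f.support, wdeg w α ≠ 0) :
    eval (fun i => if w i = 0 then a i else 0) f = 0 := by
  rw [eval_fillzero hw]
  rw [Finset.filter_false_of_mem (fun α hα => h α hα)]
  simp

lemma part1 {n : ℕ} (J : Ideal (MvPolynomial (Fin (n + 1)) ℂ)) (v : Fin (n + 1) → ℂ)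
    (hv : ∀ i, v i ≠ 0) (hpatch : PatchCond J v)
    (l : MvPolynomial (Fin (n + 1)) ℂ) (hldef : l = ∑ i, MvPolynomial.C (v i) * X i)
    (w : Fin (n + 1) → ℚ) (hw0 : ∀ i, w i ≤ 0) (hwj : ∃ j, w j = 0) (hwk : ∃ k, w k ≠ 0) :
    ∀ a : Fin (n + 1) → ℂ, (∀ i, a i ≠ 0) →
      (∀ g ∈ initialIdeal (fun i => (w i : ℝ)) J, eval a g = 0) →
      eval a (initialForm (fun i => (w i : ℝ)) l) ≠ 0 := by
  intro a ha hvan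
  obtain ⟨j, hj⟩ := hwj
  obtain ⟨k, hk⟩ := hwk
  set w' : Fin (n + 1) → ℝ := fun i => (w i : ℝ) with hw'
  have hw0' : ∀ i, w' i ≤ 0 := fun i => show ((w i : ℝ)) ≤ 0 by exact_mod_cast hw0 i
  have hwj' : w' j = 0 := by simp [hw', hj]
  have hwk' : w' k ≠ 0 := by simp [hw', hk]
  set b : Fin (n + 1) → ℂ := fun i => if w' i = 0 then a i else 0 with hb
  have hbJ : ∀ g ∈ J, eval b g = 0 := by
    intro g hg
    by_cases hex : ∃ α ∈ g.support, wdeg w' α = 0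
    · obtain ⟨α₀, hα₀, h0⟩ := hex
      rw [hb, eval_fillzero_initial hw0' a g α₀ hα₀ h0]
      exact hvan _ (Ideal.subset_span ⟨g, hg, rfl⟩)
    · push_neg at hex
      exact eval_fillzero_zero hw0' a g hex
  have hbj : b j = a j := by simp [hb, hwj']
  have hbne : b ≠ 0 := by
    intro h
    exact ha j (by rw [← hbj, h]; rfl)
  have hbzero : ∃ i, b i = 0 := ⟨k, by simp [hb, hwk']⟩
  have hsum := hpatch b hbne hbJ hbzero
  have hcoeff : coeff (Finsupp.single j 1) l = v j := by
    subst hldef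
    rw [coeff_sum]
    rw [Finset.sum_eq_single j]
    · simp [coeff_C_mul, coeff_X]
    · intro i _ hij
      rw [coeff_C_mul, coeff_X', if_neg, mul_zero]
      rw [Finsupp.single_left_inj one_ne_zero]
      exact hij
    · simp
  have hα₀ : (Finsupp.single j 1 : Fin (n + 1) →₀ ℕ) ∈ l.support :=
    mem_support_iff.mpr (by rw [hcoeff]; exact hv j)
  intro hcontra
  apply hsum
  have h1 := eval_fillzero_initial hw0' a l _ hα₀ (by rw [wdeg_single]; exact hwj')
  have h2 : eval b l = ∑ i, v i * b i := by rw [hldef]; simp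
  rw [← h2, hb, h1, hcontra]

lemma polyToLaurent_X_isUnit {n : ℕ} (i : Fin n) :
    IsUnit (polyToLaurent (X i : MvPolynomial (Fin n) ℂ)) := by
  have h : polyToLaurent (X i : MvPolynomial (Fin n) ℂ)
      = AddMonoidAlgebra.single (Finsupp.single i 1 : Fin n →₀ ℤ) 1 := by
    rw [polyToLaurent, X, ← single_eq_monomial]
    simp [AddMonoidAlgebra.mapDomainRingHom]
  rw [h]
  exact IsUnit.of_mul_eq_one (AddMonoidAlgebra.single (-(Finsupp.single i 1)) 1)
    (by rw [AddMonoidAlgebra.single_mul_single]; simp [AddMonoidAlgebra.one_def])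

lemma polyToLaurent_C {n : ℕ} (r : ℂ) :
    polyToLaurent (C r : MvPolynomial (Fin n) ℂ) = algebraMap ℂ (MvLaurent n ℂ) r := by
  rw [polyToLaurent, C_apply, ← single_eq_monomial]
  simp [AddMonoidAlgebra.mapDomainRingHom]

lemma part2 {n : ℕ} (J : Ideal (MvPolynomial (Fin (n + 1)) ℂ)) (w : Fin (n + 1) → ℚ)
    (l : MvPolynomial (Fin (n + 1)) ℂ)
    (hpt : ∀ a : Fin (n + 1) → ℂ, (∀ i, a i ≠ 0) →
      (∀ g ∈ initialIdeal (fun i => (w i : ℝ)) J, eval a g = 0) →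
      eval a (initialForm (fun i => (w i : ℝ)) l) ≠ 0) :
    Ideal.Quotient.mk (Ideal.map polyToLaurent (initialIdeal (fun i => (w i : ℝ)) J))
        (polyToLaurent (initialForm (fun i => (w i : ℝ)) l)) ∈
      nonZeroDivisors (MvLaurent (n + 1) ℂ ⧸
        Ideal.map polyToLaurent (initialIdeal (fun i => (w i : ℝ)) J)) := by
  set w' : Fin (n + 1) → ℝ := fun i => (w i : ℝ)
  set A : Ideal (MvLaurent (n + 1) ℂ) := Ideal.map polyToLaurent (initialIdeal w' J) with hA
  by_cases hU : IsUnit (Ideal.Quotient.mk A (polyToLaurent (initialForm w' l)))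
  · exact hU.mem_nonZeroDivisors
  exfalso
  obtain ⟨m, hm, hle⟩ := Ideal.exists_le_maximal
    (Ideal.span {Ideal.Quotient.mk A (polyToLaurent (initialForm w' l))})
    (fun h => hU (Ideal.span_singleton_eq_top.mp h))
  set M : Ideal (MvLaurent (n + 1) ℂ) := Ideal.comap (Ideal.Quotient.mk A) m with hM
  haveI hMmax : M.IsMaximal :=
    Ideal.comap_isMaximal_of_surjective _ Ideal.Quotient.mk_surjective
  have hAM : A ≤ M := fun x hx => by
    show Ideal.Quotient.mk A x ∈ m
    rw [Ideal.Quotient.eq_zero_iff_mem.mpr hx]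
    exact m.zero_mem
  have hlM : polyToLaurent (initialForm w' l) ∈ M :=
    hle (Ideal.mem_span_singleton_self _)
  -- residue field
  haveI : AddMonoid.FG (Fin (n + 1) →₀ ℤ) :=
    AddGroup.fg_iff_addMonoid_fg.mp (Module.Finite.iff_addGroup_fg.mp inferInstance)
  haveI : Algebra.FiniteType ℂ (MvLaurent (n + 1) ℂ) := AddMonoidAlgebra.finiteType_of_fg _ _
  letI : Field (MvLaurent (n + 1) ℂ ⧸ M) := Ideal.Quotient.field M
  haveI : Algebra.FiniteType ℂ (MvLaurent (n + 1) ℂ ⧸ M) :=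
    Algebra.FiniteType.of_surjective (Ideal.Quotient.mkₐ ℂ M) (Ideal.Quotient.mkₐ_surjective ℂ M)
  haveI : Module.Finite ℂ (MvLaurent (n + 1) ℂ ⧸ M) :=
    finite_of_finite_type_of_isJacobsonRing ℂ _
  haveI : Algebra.IsIntegral ℂ (MvLaurent (n + 1) ℂ ⧸ M) := Algebra.IsIntegral.of_finite ℂ _
  have hbij : Function.Bijective (algebraMap ℂ (MvLaurent (n + 1) ℂ ⧸ M)) :=
    ⟨(algebraMap ℂ _).injective, IsAlgClosed.algebraMap_bijective_of_isIntegral.2⟩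
  set e : ℂ ≃+* (MvLaurent (n + 1) ℂ ⧸ M) := RingEquiv.ofBijective _ hbij with he
  set ψ : MvPolynomial (Fin (n + 1)) ℂ →+* ℂ :=
    e.symm.toRingHom.comp ((Ideal.Quotient.mk M).comp polyToLaurent) with hψ
  have hψ_apply : ∀ p, e (ψ p) = Ideal.Quotient.mk M (polyToLaurent p) := by
    intro p
    simp [hψ, he]
  have hψC : ∀ r, ψ (C r) = r := by
    intro r
    apply e.injective
    rw [hψ_apply, polyToLaurent_C, Ideal.Quotient.mk_algebraMap]
    rfl
  set x : Fin (n + 1) → ℂ := fun i => ψ (X i) with hx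
  have hψeval : ψ = eval x :=
    ringHom_ext (fun r => by rw [hψC, eval_C]) (fun i => by rw [eval_X])
  have hmem : ∀ p, polyToLaurent p ∈ M → eval x p = 0 := by
    intro p hp
    rw [← hψeval]
    apply e.injective
    rw [hψ_apply, map_zero, Ideal.Quotient.eq_zero_iff_mem.mpr hp]
  have hxne : ∀ i, x i ≠ 0 := by
    intro i hxi
    have : polyToLaurent (X i : MvPolynomial (Fin (n + 1)) ℂ) ∈ M := by
      rw [← Ideal.Quotient.eq_zero_iff_mem]
      have := hψ_apply (X i)
      rw [show ψ (X i) = x i from rfl, hxi, map_zero] at this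
      exact this.symm
    exact hMmax.ne_top (M.eq_top_of_isUnit_mem this (polyToLaurent_X_isUnit i))
  have hvan : ∀ g ∈ initialIdeal w' J, eval x g = 0 := by
    intro g hg
    exact hmem g (hAM (Ideal.mem_map_of_mem _ hg))
  exact hpt x hxne hvan (hmem _ hlM)

/-- If the curve's projective closure meets no coordinate hyperplane in the patch `v·x = 1`
and `w ≤ 0` has a zero and a nonzero coordinate, then `In_w(ℓ)` does not vanish at any point of
the torus in the variety of `In_w(J)`; in particular `In_w(ℓ)` is not a zero-divisor modulo the
ideal generated by `In_w(J)` in the Laurent polynomial ring. -/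
theorem initialForm_patch_nonvanishing {n : ℕ}
    (I : Ideal (MvPolynomial (Fin n) ℂ)) (hI : I.IsPrime)
    (hdim : ringKrullDim (MvPolynomial (Fin n) ℂ ⧸ I) = 1)
    (J : Ideal (MvPolynomial (Fin (n + 1)) ℂ)) (hJ : J = projClosureIdeal I)
    (hXJ : ∀ i, X i ∉ J)
    (v : Fin (n + 1) → ℂ) (hv : ∀ i, v i ≠ 0) (hpatch : PatchCond J v)
    (l : MvPolynomial (Fin (n + 1)) ℂ) (hldef : l = ∑ i, MvPolynomial.C (v i) * X i)
    (w : Fin (n + 1) → ℚ) (hw0 : ∀ i, w i ≤ 0) (hwj : ∃ j, w j = 0)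
    (hwk : ∃ k, w k ≠ 0) :
    (∀ a : Fin (n + 1) → ℂ, (∀ i, a i ≠ 0) →
        (∀ g ∈ initialIdeal (fun i => (w i : ℝ)) J, eval a g = 0) →
        eval a (initialForm (fun i => (w i : ℝ)) l) ≠ 0) ∧
    Ideal.Quotient.mk (Ideal.map polyToLaurent (initialIdeal (fun i => (w i : ℝ)) J))
        (polyToLaurent (initialForm (fun i => (w i : ℝ)) l)) ∈
      nonZeroDivisors (MvLaurent (n + 1) ℂ ⧸
        Ideal.map polyToLaurent (initialIdeal (fun i => (w i : ℝ)) J)) :=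
  ⟨part1 J v hv hpatch l hldef w hw0 hwj hwk,
   part2 J w l (part1 J v hv hpatch l hldef w hw0 hwj hwk)⟩

end
end

section
/- Let v ∈ (ℂ*)^{n+1} satisfy the patch condition for J, and set Î = J + ⟨v_0 x_0 + … + v_n x_n − 1⟩ ⊆ ℂ[x_0,…,x_n]. Let K = ℂ((t)). Then for every nonzero u ∈ ℤ^n the following are equivalent: (a) there exists z ∈ (K*)^n with f(z) = 0 for all f ∈ I and −val(z_i) = u_i for all i = 1,…,n; (b) there exists y ∈ (K*)^{n+1} with f(y) = 0 for all f ∈ Î, val(y_i) ≥ 0 for all i = 0,…,n, and u_i = val(y_0) − val(y_i) for all i = 1,…,n. -/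
open MvPolynomial
open scoped Classical

noncomputable section

section Helpers
variable {S : Type*} [CommRing S] [Algebra ℂ S]

lemma aeval_scale {N : ℕ} {φ : MvPolynomial (Fin N) ℂ} {d : ℕ} (hφ : φ.IsHomogeneous d)
    (c : S) (x : Fin N → S) : aeval (fun i => c * x i) φ = c ^ d * aeval x φ := by
  rw [aeval_def, aeval_def, eval₂_eq', eval₂_eq', Finset.mul_sum]
  refine Finset.sum_congr rfl fun m hm => ?_
  have hd : m.degree = d := by
    rw [Finsupp.degree_eq_weight_one]; exact hφ (mem_support_iff.mp hm)
  have : ∏ i, (c * x i) ^ m i = c ^ d * ∏ i, (x i) ^ m i := by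
    simp_rw [mul_pow]
    rw [Finset.prod_mul_distrib, Finset.prod_pow_eq_pow_sum]
    congr 1
    rw [← hd, Finsupp.degree_eq_weight_one, Finsupp.weight_apply]
    simp [Finsupp.sum_fintype]
  rw [this]; ring

lemma aeval_cons_one {n : ℕ} (z : Fin n → S) (F : MvPolynomial (Fin (n + 1)) ℂ) :
    aeval (Fin.cons 1 z) F
      = aeval z (aeval (Fin.cons (1 : MvPolynomial (Fin n) ℂ) X) F) := by
  set g : Fin (n + 1) → MvPolynomial (Fin n) ℂ := Fin.cons 1 X with hg
  have h : (fun i => aeval z (g i)) = Fin.cons (1 : S) z := by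
    funext i
    refine Fin.cases ?_ (fun j => ?_) i <;> simp [hg]
  rw [comp_aeval_apply, h]

end Helpers

def homog {n : ℕ} (f : MvPolynomial (Fin n) ℂ) : MvPolynomial (Fin (n + 1)) ℂ :=
  ∑ m ∈ f.support, monomial (Finsupp.cons (f.totalDegree - m.degree) m) (coeff m f)

lemma degree_cons {n : ℕ} (k : ℕ) (m : Fin n →₀ ℕ) :
    (Finsupp.cons k m).degree = k + m.degree := by
  rw [Finsupp.degree_eq_weight_one, Finsupp.degree_eq_weight_one]
  simp only [Finsupp.weight_apply]
  rw [Finsupp.sum_fintype _ _ (by simp), Finsupp.sum_fintype _ _ (by simp),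
    Fin.sum_univ_succ]
  simp

lemma homog_isHomogeneous {n : ℕ} (f : MvPolynomial (Fin n) ℂ) :
    (homog f).IsHomogeneous f.totalDegree := by
  apply IsHomogeneous.sum
  intro m hm
  apply isHomogeneous_monomial
  rw [degree_cons]
  have hle : m.degree ≤ f.totalDegree := by
    simpa [Finsupp.degree_apply, Finsupp.sum] using le_totalDegree hm
  omega

lemma homog_dehom {n : ℕ} (f : MvPolynomial (Fin n) ℂ) :
    aeval (Fin.cons (1 : MvPolynomial (Fin n) ℂ) X) (homog f) = f := by
  rw [homog, map_sum]
  conv_rhs => rw [(support_sum_monomial_coeff f).symm]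
  refine Finset.sum_congr rfl fun m hm => ?_
  rw [aeval_monomial, Finsupp.prod_pow, Fin.prod_univ_succ]
  simp only [Fin.cons_zero, Finsupp.cons_zero, one_pow, one_mul, Fin.cons_succ,
    Finsupp.cons_succ]
  rw [monomial_eq, Finsupp.prod_pow]
  rfl

lemma LS_order_inv (x : LaurentSeries ℂ) (hx : x ≠ 0) : (x⁻¹).order = -x.order := by
  have h := HahnSeries.order_mul (inv_ne_zero hx) hx
  rw [inv_mul_cancel₀ hx, HahnSeries.order_one] at h
  omega


/-- For the affine patch `Î = J + ⟨v·x − 1⟩` of the projective closure of the curve of `I`,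
nonzero integer vectors `u` arise as negated valuations of Laurent-series points of `I`
iff they arise, after the shift `u_i = val(y_0) − val(y_i)`, from Laurent-series points of `Î`
with nonnegative valuations. -/
theorem trop_patch_equiv {n : ℕ}
    (I : Ideal (MvPolynomial (Fin n) ℂ)) (hI : I.IsPrime)
    (hdim : ringKrullDim (MvPolynomial (Fin n) ℂ ⧸ I) = 1)
    (v : Fin (n + 1) → ℂ) (hv : ∀ i, v i ≠ 0)
    (hpatch : PatchCond (projClosureIdeal I) v)
    (Ihat : Ideal (MvPolynomial (Fin (n + 1)) ℂ))
    (hIhat : Ihat = projClosureIdeal I ⊔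
      Ideal.span {(∑ i, MvPolynomial.C (v i) * X i) - 1})
    (u : Fin n → ℤ) (hu : u ≠ 0) :
    (∃ z : Fin n → LaurentSeries ℂ, (∀ i, z i ≠ 0) ∧
        (∀ f ∈ I, aeval z f = 0) ∧ ∀ i, -(z i).order = u i) ↔
    (∃ y : Fin (n + 1) → LaurentSeries ℂ, (∀ i, y i ≠ 0) ∧
        (∀ f ∈ Ihat, aeval y f = 0) ∧ (∀ i, 0 ≤ (y i).order) ∧
        ∀ i : Fin n, u i = (y 0).order - (y i.succ).order) := by
  subst hIhat
  set ℓ : MvPolynomial (Fin (n + 1)) ℂ := ∑ i, C (v i) * X i with hℓ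
  have hℓhom : ℓ.IsHomogeneous 1 := by
    apply IsHomogeneous.sum
    intro i _
    exact isHomogeneous_C_mul_X (v i) i
  constructor
  · rintro ⟨z, hz0, hzI, hzu⟩
    set g : Fin (n + 1) → LaurentSeries ℂ := Fin.cons 1 z with hg
    have hg0 : ∀ i, g i ≠ 0 := by
      intro i
      refine Fin.cases ?_ (fun j => ?_) i <;> simp [hg, hz0]
    have hgS : ∀ F ∈ {F : MvPolynomial (Fin (n + 1)) ℂ | (∃ d, F.IsHomogeneous d) ∧
        aeval (Fin.cons (1 : MvPolynomial (Fin n) ℂ) X) F ∈ I}, aeval g F = 0 := by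
      rintro F ⟨-, hFI⟩
      rw [hg, aeval_cons_one]
      exact hzI _ hFI
    set D : LaurentSeries ℂ := aeval g ℓ with hDdef
    have hD : D = ∑ i, (algebraMap ℂ (LaurentSeries ℂ)) (v i) * g i := by
      rw [hDdef, hℓ, map_sum]
      refine Finset.sum_congr rfl fun i _ => ?_
      rw [map_mul, aeval_C, aeval_X]
    have hgna : (Finset.univ : Finset (Fin (n + 1))).Nonempty := Finset.univ_nonempty
    set m : ℤ := Finset.univ.inf' hgna (fun i => (g i).order) with hm
    have hm_le : ∀ i, m ≤ (g i).order := fun i => Finset.inf'_le _ (Finset.mem_univ i)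
    by_cases hDm : D.coeff m = 0
    · exfalso
      set w : Fin (n + 1) → LaurentSeries ℂ :=
        fun i => HahnSeries.single (-m) 1 * g i with hw
      have hw0 : ∀ i, w i ≠ 0 :=
        fun i => mul_ne_zero (HahnSeries.single_ne_zero one_ne_zero) (hg0 i)
      have hword : ∀ i, (w i).order = -m + (g i).order := by
        intro i
        rw [hw, HahnSeries.order_mul (HahnSeries.single_ne_zero one_ne_zero) (hg0 i),
          HahnSeries.order_single one_ne_zero]
      have hword0 : ∀ i, 0 ≤ (w i).order := by
        intro i; rw [hword i]; have := hm_le i; omega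
      set W : Fin (n + 1) → PowerSeries ℂ :=
        fun i => PowerSeries.X ^ ((w i).order.toNat) * (w i).powerSeriesPart with hWdef
      have hW : ∀ i, HahnSeries.ofPowerSeries ℤ ℂ (W i) = w i := by
        intro i
        rw [hWdef]
        simp only [map_mul, HahnSeries.ofPowerSeries_X_pow,
          LaurentSeries.ofPowerSeries_powerSeriesPart]
        rw [← mul_assoc, HahnSeries.single_mul_single, one_mul,
          Int.toNat_of_nonneg (hword0 i), add_neg_cancel, HahnSeries.single_zero_one, one_mul]
      set a : Fin (n + 1) → ℂ := fun i => PowerSeries.constantCoeff (R := ℂ) (W i) with ha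
      have ha_coeff : ∀ i, a i = (w i).coeff 0 := by
        intro i
        rw [← hW i]
        have := HahnSeries.ofPowerSeries_apply_coeff (Γ := ℤ) (W i) 0
        simpa using this.symm
      have key2 : ∀ p : MvPolynomial (Fin (n + 1)) ℂ,
          HahnSeries.ofPowerSeries ℤ ℂ (aeval W p) = aeval w p := by
        intro p
        rw [aeval_def, aeval_def, eval₂_comp_left (HahnSeries.ofPowerSeries ℤ ℂ)]
        have e1 : (HahnSeries.ofPowerSeries ℤ ℂ).comp (algebraMap ℂ (PowerSeries ℂ))
            = algebraMap ℂ (LaurentSeries ℂ) := by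
          refine RingHom.ext fun c => ?_
          rw [RingHom.comp_apply, HahnSeries.algebraMap_apply']
        have e2 : (HahnSeries.ofPowerSeries ℤ ℂ) ∘ W = w := funext hW
        rw [e1, e2]
      have key : ∀ p : MvPolynomial (Fin (n + 1)) ℂ,
          eval a p = PowerSeries.constantCoeff (R := ℂ) (aeval W p) := by
        intro p
        rw [aeval_def, eval₂_comp_left (PowerSeries.constantCoeff (R := ℂ))]
        rw [eval, coe_eval₂Hom]
        have e3 : (PowerSeries.constantCoeff (R := ℂ)).comp (algebraMap ℂ (PowerSeries ℂ))
            = RingHom.id ℂ := by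
          refine RingHom.ext fun c => ?_
          rw [RingHom.comp_apply, PowerSeries.algebraMap_apply, Algebra.algebraMap_self,
            RingHom.id_apply, PowerSeries.constantCoeff_C]
        have e4 : (PowerSeries.constantCoeff (R := ℂ)) ∘ W = a := rfl
        rw [e3, e4]
      have hwS : ∀ F ∈ {F : MvPolynomial (Fin (n + 1)) ℂ | (∃ d, F.IsHomogeneous d) ∧
          aeval (Fin.cons (1 : MvPolynomial (Fin n) ℂ) X) F ∈ I}, aeval w F = 0 := by
        rintro F ⟨⟨d, hd⟩, hFI⟩
        rw [hw]
        rw [aeval_scale hd]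
        rw [hgS F ⟨⟨d, hd⟩, hFI⟩, mul_zero]
      have hwJ : ∀ p ∈ projClosureIdeal I, aeval w p = 0 := by
        intro p hp
        have hle : projClosureIdeal I ≤ RingHom.ker (aeval w).toRingHom := by
          rw [projClosureIdeal, Ideal.span_le]
          intro F hF
          rw [SetLike.mem_coe, RingHom.mem_ker]
          exact hwS F hF
        exact hle hp
      have haJ : ∀ p ∈ projClosureIdeal I, eval a p = 0 := by
        intro p hp
        rw [key]
        have h0 : aeval W p = 0 := by
          apply HahnSeries.ofPowerSeries_injective (Γ := ℤ)
          rw [key2 p, hwJ p hp, map_zero]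
        rw [h0, map_zero]
      have ha0 : a ≠ 0 := by
        obtain ⟨j, -, hj⟩ := Finset.exists_mem_eq_inf' hgna (fun i => (g i).order)
        have hmj : m = (g j).order := by rw [hm, hj]
        have hwj : (w j).order = 0 := by rw [hword j]; omega
        have : a j ≠ 0 := by
          rw [ha_coeff j, ← hwj]
          exact fun h => hw0 j (HahnSeries.coeff_order_eq_zero.mp h)
        intro h
        rw [h] at this
        exact this rfl
      have hva : ∑ i, v i * a i = 0 := by
        have h1 : ∑ i, v i * a i = eval a ℓ := by
          rw [hℓ, eval_sum]
          refine Finset.sum_congr rfl fun i _ => ?_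
          simp
        rw [h1, key, ← PowerSeries.coeff_zero_eq_constantCoeff_apply]
        have h4 : (PowerSeries.coeff (R := ℂ) 0) (aeval W ℓ)
            = (HahnSeries.ofPowerSeries ℤ ℂ (aeval W ℓ)).coeff ((0 : ℕ) : ℤ) :=
          (HahnSeries.ofPowerSeries_apply_coeff _ 0).symm
        rw [h4, key2]
        have h3 : aeval w ℓ = HahnSeries.single (-m) 1 * D := by
          have := aeval_scale hℓhom (HahnSeries.single (-m) (1 : ℂ)) g
          rw [pow_one] at this
          rw [hw] at *
          rw [this, hDdef]
        rw [h3]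
        have h5 := HahnSeries.coeff_single_mul_add (r := (1 : ℂ)) (x := D) (a := m) (b := -m)
        rw [add_neg_cancel] at h5
        push_cast
        rw [h5, one_mul, hDm]
      have hall : ∀ i, a i ≠ 0 := by
        intro i hai
        exact hpatch a ha0 haJ ⟨i, hai⟩ hva
      have hordm : ∀ i, (g i).order = m := by
        intro i
        have h1 : (w i).order ≤ 0 := by
          apply HahnSeries.order_le_of_coeff_ne_zero
          rw [← ha_coeff i]
          exact hall i
        have h2 := hword i
        have h3 := hm_le i
        omega
      have hm0 : m = 0 := by
        have h := hordm 0
        rw [hg] at h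
        simpa [HahnSeries.order_one] using h.symm
      apply hu
      funext i
      have hz : (z i).order = 0 := by
        have h := hordm i.succ
        rw [hg] at h
        simp only [Fin.cons_succ] at h
        omega
      rw [← hzu i, hz, neg_zero, Pi.zero_apply]
    · have hD0 : D ≠ 0 := by
        intro h
        rw [h] at hDm
        exact hDm (HahnSeries.coeff_zero)
      have hDord : D.order ≤ m := HahnSeries.order_le_of_coeff_ne_zero hDm
      set y : Fin (n + 1) → LaurentSeries ℂ := fun i => D⁻¹ * g i with hy
      have hy0 : ∀ i, y i ≠ 0 := fun i => mul_ne_zero (inv_ne_zero hD0) (hg0 i)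
      have hyord : ∀ i, (y i).order = -D.order + (g i).order := by
        intro i
        rw [hy, HahnSeries.order_mul (inv_ne_zero hD0) (hg0 i), LS_order_inv D hD0]
      refine ⟨y, hy0, ?_, ?_, ?_⟩
      · intro f hf
        have hle : projClosureIdeal I ⊔ Ideal.span {ℓ - 1}
            ≤ RingHom.ker (aeval y).toRingHom := by
          apply sup_le
          · rw [projClosureIdeal, Ideal.span_le]
            rintro F ⟨⟨d, hd⟩, hFI⟩
            rw [SetLike.mem_coe, RingHom.mem_ker]
            show aeval y F = 0
            rw [hy, aeval_scale hd, hgS F ⟨⟨d, hd⟩, hFI⟩, mul_zero]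
          · rw [Ideal.span_le, Set.singleton_subset_iff, SetLike.mem_coe, RingHom.mem_ker]
            show aeval y (ℓ - 1) = 0
            rw [map_sub, map_one, sub_eq_zero]
            have h6 : aeval y ℓ = D⁻¹ * aeval g ℓ := by
              have := aeval_scale hℓhom (D⁻¹) g
              rw [pow_one] at this
              rw [hy, this]
            rw [h6, ← hDdef, inv_mul_cancel₀ hD0]
        exact hle hf
      · intro i
        rw [hyord i]
        have := hm_le i
        omega
      · intro i
        rw [hyord 0, hyord i.succ, ← hzu i]
        have h7 : (g 0).order = 0 := by rw [hg]; simp [HahnSeries.order_one]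
        have h8 : (g i.succ).order = (z i).order := by rw [hg]; simp
        rw [h7, h8]
        ring
  · rintro ⟨y, hy0, hyI, hyord, hyu⟩
    set z : Fin n → LaurentSeries ℂ := fun i => y i.succ * (y 0)⁻¹ with hz
    have hz0 : ∀ i, z i ≠ 0 := fun i => mul_ne_zero (hy0 _) (inv_ne_zero (hy0 0))
    have hyz : y = fun i => y 0 * (Fin.cons 1 z : Fin (n + 1) → LaurentSeries ℂ) i := by
      funext i
      refine Fin.cases ?_ (fun j => ?_) i
      · simp
      · simp only [Fin.cons_succ, hz]
        rw [mul_comm (y j.succ), ← mul_assoc, mul_inv_cancel₀ (hy0 0), one_mul]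
    refine ⟨z, hz0, ?_, ?_⟩
    · intro f hf
      have hF : aeval y (homog f) = 0 := by
        apply hyI
        apply Ideal.mem_sup_left
        apply Ideal.subset_span
        exact ⟨⟨f.totalDegree, homog_isHomogeneous f⟩, by rw [homog_dehom]; exact hf⟩
      rw [hyz, aeval_scale (homog_isHomogeneous f), aeval_cons_one, homog_dehom] at hF
      rcases mul_eq_zero.mp hF with h | h
      · exact absurd h (pow_ne_zero _ (hy0 0))
      · exact h
    · intro i
      have h1 : (z i).order = (y i.succ).order + -(y 0).order := by
        rw [hz]
        simp only []
        rw [HahnSeries.order_mul (hy0 _) (inv_ne_zero (hy0 0)), LS_order_inv _ (hy0 0)]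
      rw [h1, hyu i]
      ring

end
end

section
/- Let k be a field, let I ⊆ k[x_1,…,x_n] be an ideal, and let K = k((t)). Suppose y ∈ (K*)^n satisfies f(y) = 0 for all f ∈ I. Set w = −val(y) ∈ ℤ^n and a = coeff(y) ∈ (k*)^n. Then In_w(f)(a) = 0 for every nonzero f ∈ I. In particular, the initial ideal In_w(I) contains no monomial x^α. -/
open MvPolynomial
open scoped Classical

noncomputable section

lemma prod_pow_spec {k : Type*} [Field k] {n : ℕ} (y : Fin n → LaurentSeries k)
    (hy : ∀ i, y i ≠ 0) (α : Fin n →₀ ℕ) (s : Finset (Fin n)) :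
    (∏ i ∈ s, y i ^ α i) ≠ 0 ∧
    (∏ i ∈ s, y i ^ α i).order = ∑ i ∈ s, (α i : ℤ) * (y i).order ∧
    (∏ i ∈ s, y i ^ α i).coeff (∏ i ∈ s, y i ^ α i).order
      = ∏ i ∈ s, ((y i).coeff (y i).order) ^ α i := by
  classical
  induction s using Finset.cons_induction with
  | empty => simp [HahnSeries.order_one]
  | cons j s hj ih =>
    obtain ⟨h0, ho, hc⟩ := ih
    have hyj : y j ^ α j ≠ 0 := pow_ne_zero _ (hy j)
    have h0' : y j ^ α j * ∏ i ∈ s, y i ^ α i ≠ 0 := mul_ne_zero hyj h0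
    rw [Finset.prod_cons, Finset.prod_cons, Finset.sum_cons]
    refine ⟨h0', ?_, ?_⟩
    · rw [HahnSeries.order_mul hyj h0, HahnSeries.order_pow, ho, nsmul_eq_mul]
    · rw [HahnSeries.order_mul hyj h0, HahnSeries.coeff_mul_order_add_order,
        HahnSeries.leadingCoeff_eq, HahnSeries.leadingCoeff_eq, hc,
        HahnSeries.order_pow]
      congr 1
      induction (α j) with
      | zero => simp [HahnSeries.order_one]
      | succ m ihm =>
        rw [pow_succ, succ_nsmul]
        rcases Nat.eq_zero_or_pos m with hm | hm
        · subst hm; simp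
        · have hpm : y j ^ m ≠ 0 := pow_ne_zero _ (hy j)
          have : (m • (y j).order + (y j).order)
              = (y j ^ m).order + (y j).order := by rw [HahnSeries.order_pow]
          rw [this, HahnSeries.coeff_mul_order_add_order,
            HahnSeries.leadingCoeff_eq, HahnSeries.leadingCoeff_eq,
            HahnSeries.order_pow, ihm, pow_succ]

/-- If `y` is a tuple of nonzero Laurent series solving every `f ∈ I`, then with
`w = −val(y)` and `a = coeff(y)`, every nonzero `f ∈ I` satisfies `In_w(f)(a) = 0`;
in particular `In_w(I)` contains no monomial. -/
theorem initialIdeal_no_monomial {k : Type*} [Field k] {n : ℕ}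
    (I : Ideal (MvPolynomial (Fin n) k))
    (y : Fin n → LaurentSeries k) (hy : ∀ i, y i ≠ 0)
    (hsol : ∀ f ∈ I, aeval y f = 0) :
    (∀ f ∈ I, f ≠ 0 →
        eval (fun i => (y i).coeff (y i).order)
          (initialForm (fun i => -((y i).order : ℝ)) f) = 0) ∧
    ∀ α : Fin n →₀ ℕ,
      monomial α (1 : k) ∉ initialIdeal (fun i => -((y i).order : ℝ)) I := by
  classical
  set a : Fin n → k := fun i => (y i).coeff (y i).order with ha
  set w : Fin n → ℝ := fun i => -((y i).order : ℝ) with hw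
  set v : (Fin n →₀ ℕ) → ℤ := fun α => ∑ i, (α i : ℤ) * (y i).order with hv
  have hwv : ∀ α : Fin n →₀ ℕ, wdeg w α = -((v α : ℤ) : ℝ) := by
    intro α
    simp only [wdeg, hv, hw]
    push_cast
    rw [← Finset.sum_neg_distrib]
    exact Finset.sum_congr rfl fun i _ => by ring
  have hcmp : ∀ α β : Fin n →₀ ℕ, (wdeg w β ≤ wdeg w α ↔ v α ≤ v β) := by
    intro α β
    rw [hwv, hwv, neg_le_neg_iff, Int.cast_le]
  -- Part 1
  have part1 : ∀ f ∈ I, f ≠ 0 → eval a (initialForm w f) = 0 := by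
    intro f hfI hf
    obtain ⟨α₀, hα₀, hmax⟩ :=
      Finset.exists_max_image f.support (wdeg w) (support_nonempty.mpr hf)
    set d : ℤ := v α₀ with hd
    set T := f.support.filter (fun α => ∀ β ∈ f.support, wdeg w β ≤ wdeg w α) with hT
    have hdmin : ∀ β ∈ f.support, d ≤ v β := fun β hβ => (hcmp α₀ β).mp (hmax β hβ)
    have hTeq : ∀ α ∈ T, v α = d := by
      intro α hα
      rw [Finset.mem_filter] at hα
      exact le_antisymm ((hcmp α α₀).mp (hα.2 α₀ hα₀)) (hdmin α hα.1)
    have hTgt : ∀ α ∈ f.support, α ∉ T → d < v α := by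
      intro α hα hαT
      rw [hT, Finset.mem_filter, not_and] at hαT
      push_neg at hαT
      obtain ⟨β, hβ, hβα⟩ := hαT hα
      have : ¬ v α ≤ v β := fun h => (not_le.mpr hβα) ((hcmp α β).mpr h)
      exact lt_of_le_of_lt (hdmin β hβ) (lt_of_not_ge this)
    -- coefficient extraction
    have h0 : (aeval y f : LaurentSeries k).coeff d = 0 := by rw [hsol f hfI]; rfl
    have heval : (aeval y f : LaurentSeries k)
        = ∑ α ∈ f.support, algebraMap k (LaurentSeries k) (coeff α f) * ∏ i, y i ^ α i := by
      rw [aeval_def, eval₂_eq']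
    have hcoeff : ∀ α ∈ f.support,
        (algebraMap k (LaurentSeries k) (coeff α f) * ∏ i, y i ^ α i).coeff d
          = if α ∈ T then coeff α f * ∏ i, a i ^ α i else 0 := by
      intro α hα
      obtain ⟨hne, ho, hc⟩ := prod_pow_spec y hy α Finset.univ
      have hCmul : (algebraMap k (LaurentSeries k) (coeff α f) * ∏ i, y i ^ α i).coeff d
          = coeff α f * (∏ i, y i ^ α i).coeff d := by
        have hC : (algebraMap k (LaurentSeries k)) (coeff α f)
            = HahnSeries.single (0:ℤ) (coeff α f) := by
          rw [HahnSeries.algebraMap_apply', PowerSeries.algebraMap_apply, Algebra.algebraMap_self, RingHom.id_apply,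
            HahnSeries.ofPowerSeries_C, HahnSeries.C_apply]
        rw [hC, HahnSeries.coeff_single_zero_mul]
      by_cases hαT : α ∈ T
      · rw [if_pos hαT, hCmul]
        have : d = (∏ i, y i ^ α i).order := by rw [ho, ← hTeq α hαT]
        rw [this, hc]
      · rw [if_neg hαT, hCmul]
        have hdlt : d < (∏ i, y i ^ α i).order := by rw [ho]; exact hTgt α hα hαT
        rw [HahnSeries.coeff_eq_zero_of_lt_order hdlt, mul_zero]
    have hsum : ∑ α ∈ T, coeff α f * ∏ i, a i ^ α i = 0 := by
      have hsplit : (∑ α ∈ f.support,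
            algebraMap k (LaurentSeries k) (coeff α f) * ∏ i, y i ^ α i).coeff d
          = ∑ α ∈ f.support,
            (algebraMap k (LaurentSeries k) (coeff α f) * ∏ i, y i ^ α i).coeff d :=
        map_sum (HahnSeries.coeff.addMonoidHom d) _ _
      have := h0
      rw [heval, hsplit] at this
      rw [Finset.sum_congr rfl hcoeff, Finset.sum_ite_mem,
        Finset.inter_eq_right.mpr (Finset.filter_subset _ _)] at this
      exact this
    rw [initialForm, map_sum, ← hT]
    rw [← hsum]
    refine Finset.sum_congr rfl fun α hα => ?_
    rw [eval_monomial, Finsupp.prod_pow]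
  refine ⟨part1, ?_⟩
  intro α hmem
  have hker : initialIdeal w I ≤ RingHom.ker (eval a) := by
    rw [initialIdeal, Ideal.span_le]
    rintro g ⟨f, hfI, rfl⟩
    rw [SetLike.mem_coe, RingHom.mem_ker]
    by_cases hf : f = 0
    · subst hf; simp [initialForm]
    · exact part1 f hfI hf
  have := hker hmem
  rw [RingHom.mem_ker, eval_monomial, Finsupp.prod_pow, one_mul] at this
  exact Finset.prod_ne_zero_iff.mpr
    (fun i _ => pow_ne_zero _ (by show (y i).coeff (y i).order ≠ 0; rw [← HahnSeries.leadingCoeff_eq]; exact HahnSeries.leadingCoeff_ne_zero.mpr (hy i))) this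


end
end

section
/- There is no pair of nonzero formal Laurent series x, y ∈ ℝ((t)) satisfying x^6 − x^3 + y^2 = 0 with val(x) < 0. In particular, there is no zero of x^6 − x^3 + y^2 over ℝ((t)) whose negated valuation vector (−val(x), −val(y)) lies on the ray spanned by (1,3). -/
noncomputable section

open HahnSeries

lemma lc_mul {x y : LaurentSeries ℝ} (hx : x ≠ 0) (hy : y ≠ 0) :
    (x * y).leadingCoeff = x.leadingCoeff * y.leadingCoeff := by
  rw [leadingCoeff_eq, order_mul hx hy, coeff_mul_order_add_order]

lemma lc_pow {x : LaurentSeries ℝ} (hx : x ≠ 0) (n : ℕ) :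
    (x ^ n).leadingCoeff = x.leadingCoeff ^ n := by
  induction n with
  | zero => simpa using leadingCoeff_one
  | succ n ih => rw [pow_succ, lc_mul (pow_ne_zero _ hx) hx, ih, pow_succ]

lemma key : ¬ ∃ x y : LaurentSeries ℝ, x ≠ 0 ∧ y ≠ 0 ∧
    x ^ 6 - x ^ 3 + y ^ 2 = 0 ∧ x.order < 0 := by
  rintro ⟨x, y, hx, hy, heq, hord⟩
  have h6 : (x ^ 6).order = 6 * x.order := by
    rw [order_pow]; push_cast [smul_eq_mul]; ring
  have h3 : (x ^ 3).order = 3 * x.order := by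
    rw [order_pow]; push_cast [smul_eq_mul]; ring
  have h2 : (y ^ 2).order = 2 * y.order := by
    rw [order_pow]; push_cast [smul_eq_mul]; ring
  have h63 : (x ^ 6).order < (x ^ 3).order := by
    rw [h6, h3]; nlinarith
  have hlcx : (x ^ 6).leadingCoeff > 0 := by
    rw [lc_pow hx]
    have : x.leadingCoeff ≠ 0 := leadingCoeff_ne_zero.mpr hx
    positivity
  have hlcy : (y ^ 2).leadingCoeff > 0 := by
    rw [lc_pow hy]
    have : y.leadingCoeff ≠ 0 := leadingCoeff_ne_zero.mpr hy
    positivity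
  -- compare at order of x^6 and order of y^2
  have hcoeff : ∀ g : ℤ, (x ^ 6).coeff g - (x ^ 3).coeff g + (y ^ 2).coeff g = 0 := by
    intro g
    have := congrArg (fun z : LaurentSeries ℝ => z.coeff g) heq
    simpa [sub_eq_add_neg] using this
  rcases lt_trichotomy ((y ^ 2).order) ((x ^ 6).order) with h | h | h
  · have c1 : (x ^ 6).coeff ((y ^ 2).order) = 0 := coeff_eq_zero_of_lt_order h
    have c2 : (x ^ 3).coeff ((y ^ 2).order) = 0 :=
      coeff_eq_zero_of_lt_order (h.trans h63)
    have := hcoeff ((y ^ 2).order)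
    rw [c1, c2, ← leadingCoeff_eq] at this
    linarith
  · have c2 : (x ^ 3).coeff ((x ^ 6).order) = 0 := coeff_eq_zero_of_lt_order h63
    have := hcoeff ((x ^ 6).order)
    rw [c2, ← leadingCoeff_eq, ← h, ← leadingCoeff_eq] at this
    linarith
  · have c1 : (y ^ 2).coeff ((x ^ 6).order) = 0 := coeff_eq_zero_of_lt_order h
    have c2 : (x ^ 3).coeff ((x ^ 6).order) = 0 := coeff_eq_zero_of_lt_order h63
    have := hcoeff ((x ^ 6).order)
    rw [c1, c2, ← leadingCoeff_eq] at this
    linarith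

/-- No pair of nonzero real Laurent series with `val(x) < 0` solves `x⁶ − x³ + y² = 0`;
in particular no solution has negated valuation vector on the ray spanned by `(1,3)`. -/
theorem sextic_no_real_branch :
    (¬ ∃ x y : LaurentSeries ℝ, x ≠ 0 ∧ y ≠ 0 ∧
        x ^ 6 - x ^ 3 + y ^ 2 = 0 ∧ x.order < 0) ∧
    ¬ ∃ x y : LaurentSeries ℝ, x ≠ 0 ∧ y ≠ 0 ∧
        x ^ 6 - x ^ 3 + y ^ 2 = 0 ∧
        ∃ c : ℤ, 0 < c ∧ -x.order = c ∧ -y.order = 3 * c := by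
  refine ⟨key, ?_⟩
  rintro ⟨x, y, hx, hy, heq, c, hc, hxc, -⟩
  exact key ⟨x, y, hx, hy, heq, by omega⟩

end
end

section
/- Let f = x^4 + y^4 − (x − y)^2(x + y) ∈ ℝ[x,y]. For each ε ∈ {1, −1}, there exists a formal power series x ∈ ℝ[[t]] with constant coefficient 1 and coefficient of t equal to −ε such that f(x, εt) = 0 in ℝ[[t]]. Consequently the real tropical variety of f contains the direction (0,−1) with sign patterns (+,+) and (+,−). -/
noncomputable section

open PowerSeries

instance : IsAdicComplete (IsLocalRing.maximalIdeal ℝ⟦X⟧) ℝ⟦X⟧ where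
  haus' x hx := by
    simp only [← Ideal.one_eq_top, smul_eq_mul, mul_one, SModEq.sub_mem, sub_zero,
      PowerSeries.maximalIdeal_eq_span_X, Ideal.span_singleton_pow, Ideal.mem_span_singleton,
      PowerSeries.X_pow_dvd_iff] at hx
    ext n
    simpa using hx (n + 1) n (by omega)
  prec' x hx := by
    simp only [← Ideal.one_eq_top, smul_eq_mul, mul_one, SModEq.sub_mem,
      PowerSeries.maximalIdeal_eq_span_X, Ideal.span_singleton_pow, Ideal.mem_span_singleton,
      PowerSeries.X_pow_dvd_iff] at hx ⊢
    refine ⟨PowerSeries.mk fun n => PowerSeries.coeff n (x (n + 1)), fun n m hm => ?_⟩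
    simp only [map_sub, PowerSeries.coeff_mk, sub_eq_zero]
    rcases le_total n (m + 1) with h' | h'
    · have := hx h' m (by omega)
      rw [map_sub, sub_eq_zero] at this
      exact this
    · have := hx h' m (by omega)
      rw [map_sub, sub_eq_zero] at this
      exact this.symm

/-- For `f = x⁴ + y⁴ − (x − y)²(x + y)` and each `ε ∈ {1, −1}`, there is a real power series
`x = 1 − ε t + …` with `f(x, εt) = 0`; hence the real tropical variety of `f` contains the
direction `(0,−1)` with sign patterns `(+,+)` and `(+,−)`. -/
theorem quartic_real_branches (ε : ℝ) (hε : ε = 1 ∨ ε = -1) :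
    ∃ x : PowerSeries ℝ, PowerSeries.coeff (R := ℝ) 0 x = 1 ∧ PowerSeries.coeff (R := ℝ) 1 x = -ε ∧
      x ^ 4 + (PowerSeries.C (R := ℝ) ε * PowerSeries.X) ^ 4 -
        (x - PowerSeries.C (R := ℝ) ε * PowerSeries.X) ^ 2 *
          (x + PowerSeries.C (R := ℝ) ε * PowerSeries.X) = 0 := by
  set c : ℝ⟦X⟧ := PowerSeries.C (R := ℝ) ε * PowerSeries.X with hc
  set I := IsLocalRing.maximalIdeal ℝ⟦X⟧ with hI
  have hcI : c ∈ I := by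
    rw [hI, PowerSeries.maximalIdeal_eq_span_X, Ideal.mem_span_singleton]
    exact ⟨PowerSeries.C ε, mul_comm _ _⟩
  set f : Polynomial ℝ⟦X⟧ :=
    Polynomial.X ^ 4 - Polynomial.X ^ 3 + Polynomial.C c * Polynomial.X ^ 2
      + Polynomial.C (c ^ 2) * Polynomial.X + (Polynomial.C (c ^ 4) - Polynomial.C (c ^ 3))
    with hf
  have hmonic : f.Monic := by
    have h4 : f = Polynomial.X ^ (3 + 1) + (- Polynomial.X ^ 3 + Polynomial.C c * Polynomial.X ^ 2
        + Polynomial.C (c ^ 2) * Polynomial.X + (Polynomial.C (c ^ 4) - Polynomial.C (c ^ 3))) := by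
      rw [hf]; ring
    have hdeg : (- Polynomial.X ^ 3 + Polynomial.C c * Polynomial.X ^ 2
        + Polynomial.C (c ^ 2) * Polynomial.X
        + (Polynomial.C (c ^ 4) - Polynomial.C (c ^ 3)) : Polynomial ℝ⟦X⟧).degree ≤ 3 := by
      compute_degree
    rw [h4]
    exact Polynomial.monic_X_pow_add (hdeg.trans_lt (by norm_num))
  have heval : f.eval 1 ∈ I := by
    have h1 : f.eval 1 = c + c ^ 2 + (c ^ 4 - c ^ 3) := by
      simp only [hf, Polynomial.eval_add, Polynomial.eval_sub, Polynomial.eval_mul,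
        Polynomial.eval_pow, Polynomial.eval_X, Polynomial.eval_C, Polynomial.eval_one]
      ring
    rw [h1]
    exact add_mem (add_mem hcI (Ideal.pow_mem_of_mem I hcI 2 (by omega)))
      (sub_mem (Ideal.pow_mem_of_mem I hcI 4 (by omega)) (Ideal.pow_mem_of_mem I hcI 3 (by omega)))
  have hc0 : PowerSeries.constantCoeff c = 0 := by simp [hc]
  have hderiv : IsUnit (Ideal.Quotient.mk I (f.derivative.eval 1)) := by
    haveI hIm : I.IsMaximal := IsLocalRing.maximalIdeal.isMaximal _
    letI : Field (ℝ⟦X⟧ ⧸ I) := Ideal.Quotient.field I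
    rw [isUnit_iff_ne_zero, Ne, Ideal.Quotient.eq_zero_iff_mem]
    intro hmem
    have hd : f.derivative.eval 1 = 1 + 2 * c + c ^ 2 := by
      simp only [hf, Polynomial.derivative_add, Polynomial.derivative_sub,
        Polynomial.derivative_mul, Polynomial.derivative_pow, Polynomial.derivative_X,
        Polynomial.derivative_C, Polynomial.eval_add, Polynomial.eval_sub, Polynomial.eval_mul,
        Polynomial.eval_pow, Polynomial.eval_X, Polynomial.eval_C, Polynomial.eval_one,
        Polynomial.eval_zero, Polynomial.derivative_one]
      ring
    rw [hd, hI, ← PowerSeries.ker_coeff_eq_max_ideal, RingHom.mem_ker] at hmem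
    simp [hc0] at hmem
  obtain ⟨a, ha, haI⟩ := (IsAdicComplete.henselianRing ℝ⟦X⟧ I).is_henselian f hmonic 1 heval hderiv
  have hroot : a ^ 4 + c ^ 4 - (a - c) ^ 2 * (a + c) = 0 := by
    have h2 : a ^ 4 + c ^ 4 - (a - c) ^ 2 * (a + c) = f.eval a := by
      simp only [hf, Polynomial.eval_add, Polynomial.eval_sub, Polynomial.eval_mul,
        Polynomial.eval_pow, Polynomial.eval_X, Polynomial.eval_C]
      ring
    rw [h2]; exact ha
  have h0a : PowerSeries.constantCoeff a = 1 := by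
    rw [hI, ← PowerSeries.ker_coeff_eq_max_ideal, RingHom.mem_ker, map_sub, map_one,
      sub_eq_zero] at haI
    exact haI
  have h1c : PowerSeries.coeff 1 c = ε := by simp [hc]
  have h1a : PowerSeries.coeff 1 a = -ε := by
    have hE := congrArg (PowerSeries.coeff (R := ℝ) 1) hroot
    have e4 : (a : ℝ⟦X⟧) ^ 4 = a * a * (a * a) := by ring
    have ec4 : (c : ℝ⟦X⟧) ^ 4 = c * c * (c * c) := by ring
    have e2 : ((a - c) : ℝ⟦X⟧) ^ 2 = (a - c) * (a - c) := by ring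
    rw [e4, ec4, e2] at hE
    simp only [map_sub, map_add, PowerSeries.coeff_one_mul, map_mul, map_one, map_zero,
      h0a, hc0, h1c] at hE
    nlinarith [hE]
  exact ⟨a, by simpa using h0a, h1a, hroot⟩

end
end

section
/- There exists a formal power series y ∈ ℝ[[t]] of order 3 such that t^6·y − t^2·y^3 + t^6 − y^2 = 0 in ℝ[[t]]. Consequently, the pair (x_1, x_2) = (t^2, y) is a zero of x_1^3 x_2 − x_1 x_2^3 + x_1^3 − x_2^2 over ℝ((t)) with (−val(x_1), −val(x_2)) = (−2, −3). -/
noncomputable section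

open PowerSeries

lemma quartic_smul_top_eq (I : Ideal ℝ⟦X⟧) : (I • ⊤ : Submodule ℝ⟦X⟧ ℝ⟦X⟧) = I := by
  rw [smul_eq_mul, Ideal.mul_top]

lemma quartic_mem_span_X_pow {n : ℕ} {f : ℝ⟦X⟧} :
    f ∈ (Ideal.span {X} : Ideal ℝ⟦X⟧) ^ n ↔ ∀ m < n, coeff m f = 0 := by
  rw [Ideal.span_singleton_pow, Ideal.mem_span_singleton]
  exact PowerSeries.X_pow_dvd_iff

instance quartic_adic : IsAdicComplete (Ideal.span {X} : Ideal ℝ⟦X⟧) ℝ⟦X⟧ where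
  haus' x hx := by
    ext n
    have h := (SModEq.zero.mp (hx (n + 1)))
    rw [quartic_smul_top_eq, quartic_mem_span_X_pow] at h
    simpa using h n (by omega)
  prec' f hf := by
    refine ⟨PowerSeries.mk fun n => coeff n (f (n + 1)), fun n => ?_⟩
    rw [SModEq.sub_mem, quartic_smul_top_eq, quartic_mem_span_X_pow]
    intro m hm
    have h := SModEq.sub_mem.mp (hf (show m + 1 ≤ n by omega))
    rw [quartic_smul_top_eq, quartic_mem_span_X_pow] at h
    have h2 := h m (by omega)
    rw [map_sub] at h2 ⊢
    rw [coeff_mk]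
    have := sub_eq_zero.mp h2
    rw [← this]
    ring

lemma quartic_exists_v :
    ∃ v : ℝ⟦X⟧, v ^ 3 + X ^ 3 * v ^ 2 - v - X ^ 5 = 0 ∧ constantCoeff v = 1 := by
  have H : HenselianRing ℝ⟦X⟧ (Ideal.span {X}) := inferInstance
  set g : Polynomial ℝ⟦X⟧ :=
    Polynomial.X ^ 3 + Polynomial.C (X ^ 3) * Polynomial.X ^ 2 - Polynomial.X
      - Polynomial.C (X ^ 5) with hg
  have hmonic : g.Monic := by unfold g; monicity!
  have heval : g.eval 1 ∈ Ideal.span ({X} : Set ℝ⟦X⟧) := by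
    simp only [hg, Polynomial.eval_sub, Polynomial.eval_add, Polynomial.eval_mul,
      Polynomial.eval_pow, Polynomial.eval_X, Polynomial.eval_C, one_pow, mul_one]
    exact Ideal.mem_span_singleton.2 ⟨X ^ 2 - X ^ 4, by ring⟩
  have hderiv : IsUnit (Ideal.Quotient.mk (Ideal.span ({X} : Set ℝ⟦X⟧))
      (g.derivative.eval 1)) := by
    have h1 : g.derivative.eval 1 = 2 + 2 * X ^ 3 := by
      simp only [hg, Polynomial.derivative_sub, Polynomial.derivative_add,
        Polynomial.derivative_pow, Polynomial.derivative_X, Polynomial.derivative_C_mul,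
        Polynomial.derivative_C]
      simp
      ring
    rw [h1]
    have : IsUnit (2 + 2 * X ^ 3 : ℝ⟦X⟧) := by
      rw [PowerSeries.isUnit_iff_constantCoeff]
      simp only [map_add, map_mul, map_pow, constantCoeff_X, map_ofNat]
      norm_num
    exact this.map _
  obtain ⟨v, hv, hv1⟩ := H.is_henselian g hmonic 1 heval hderiv
  refine ⟨v, ?_, ?_⟩
  · have := hv
    simp only [Polynomial.IsRoot, hg, Polynomial.eval_sub, Polynomial.eval_add,
      Polynomial.eval_mul, Polynomial.eval_pow, Polynomial.eval_X, Polynomial.eval_C] at this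
    linear_combination this
  · obtain ⟨c, hc⟩ := Ideal.mem_span_singleton.1 hv1
    have := congrArg (constantCoeff) hc
    simp at this
    linarith [this]

/-- There is a real power series `y` of order `3` with `t⁶y − t²y³ + t⁶ − y² = 0`;
consequently `(x₁, x₂) = (t², y)` is a zero of `x₁³x₂ − x₁x₂³ + x₁³ − x₂²` over `ℝ((t))`
with `(−val x₁, −val x₂) = (−2, −3)`. -/
theorem quartic_branch_exists :
    ∃ y : PowerSeries ℝ, y.order = 3 ∧
      PowerSeries.X ^ 6 * y - PowerSeries.X ^ 2 * y ^ 3 + PowerSeries.X ^ 6 - y ^ 2 = 0 ∧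
      (HahnSeries.ofPowerSeries ℤ ℝ PowerSeries.X ^ 2) ^ 3 *
            HahnSeries.ofPowerSeries ℤ ℝ y -
          HahnSeries.ofPowerSeries ℤ ℝ PowerSeries.X ^ 2 *
            (HahnSeries.ofPowerSeries ℤ ℝ y) ^ 3 +
          (HahnSeries.ofPowerSeries ℤ ℝ PowerSeries.X ^ 2) ^ 3 -
          (HahnSeries.ofPowerSeries ℤ ℝ y) ^ 2 = 0 ∧
      (HahnSeries.ofPowerSeries ℤ ℝ PowerSeries.X ^ 2 : LaurentSeries ℝ).order = 2 ∧
      (HahnSeries.ofPowerSeries ℤ ℝ y : LaurentSeries ℝ).order = 3 := by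
  obtain ⟨v, hv0, hv1⟩ := quartic_exists_v
  set u : ℝ⟦X⟧ := v⁻¹ with hu_def
  have huv : v * u = 1 := PowerSeries.mul_inv_cancel v (by rw [hv1]; norm_num)
  have hu1 : constantCoeff u = 1 := by
    rw [hu_def, PowerSeries.constantCoeff_inv, hv1, inv_one]
  have hu : IsUnit u := PowerSeries.isUnit_iff_constantCoeff.2 (by rw [hu1]; exact isUnit_one)
  have key : 1 + X ^ 3 * u - u ^ 2 - X ^ 5 * u ^ 3 = 0 := by
    linear_combination u ^ 3 * hv0 -
      (1 + v * u + (v * u) ^ 2 + X ^ 3 * u * (1 + v * u) - u ^ 2) * huv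
  set y : ℝ⟦X⟧ := X ^ 3 * u with hy_def
  have hmain : X ^ 6 * y - X ^ 2 * y ^ 3 + X ^ 6 - y ^ 2 = 0 := by
    rw [hy_def]
    linear_combination (X : ℝ⟦X⟧) ^ 6 * key
  have hUne : u ≠ 0 := hu.ne_zero
  have hyne : y ≠ 0 := by
    rw [hy_def]
    exact mul_ne_zero (pow_ne_zero _ PowerSeries.X_ne_zero) hUne
  refine ⟨y, ?_, hmain, ?_, ?_, ?_⟩
  · rw [hy_def, PowerSeries.order_mul, order_X_pow, order_zero_of_unit hu, add_zero]
    rfl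
  · have : (HahnSeries.ofPowerSeries ℤ ℝ PowerSeries.X ^ 2) ^ 3 *
            HahnSeries.ofPowerSeries ℤ ℝ y -
          HahnSeries.ofPowerSeries ℤ ℝ PowerSeries.X ^ 2 *
            (HahnSeries.ofPowerSeries ℤ ℝ y) ^ 3 +
          (HahnSeries.ofPowerSeries ℤ ℝ PowerSeries.X ^ 2) ^ 3 -
          (HahnSeries.ofPowerSeries ℤ ℝ y) ^ 2
        = HahnSeries.ofPowerSeries ℤ ℝ
            ((X ^ 2) ^ 3 * y - X ^ 2 * y ^ 3 + (X ^ 2) ^ 3 - y ^ 2) := by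
      simp only [map_sub, map_add, map_mul, map_pow]
    rw [this, show (X ^ 2) ^ 3 * y - X ^ 2 * y ^ 3 + (X ^ 2) ^ 3 - y ^ 2 = 0 by
      linear_combination hmain, map_zero]
  · rw [HahnSeries.ofPowerSeries_X, HahnSeries.order_pow,
      HahnSeries.order_single (one_ne_zero), nsmul_eq_mul]
    norm_num
  · -- order of ofPowerSeries y = 3
    have hOu_ne : HahnSeries.ofPowerSeries ℤ ℝ u ≠ 0 := by
      intro h
      exact hUne (HahnSeries.ofPowerSeries_injective (by rw [h, map_zero]))
    have hOu_coeff0 : (HahnSeries.ofPowerSeries ℤ ℝ u).coeff (0 : ℤ) = 1 := by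
      have h := HahnSeries.ofPowerSeries_apply_coeff (Γ := ℤ) (R := ℝ) u 0
      simpa [hu1] using h
    have hOu_nonneg : ∀ m : ℤ, m < 0 → (HahnSeries.ofPowerSeries ℤ ℝ u).coeff m = 0 := by
      intro m hm
      rw [HahnSeries.ofPowerSeries_apply]
      apply HahnSeries.embDomain_notin_range
      rintro ⟨k, hk⟩
      simp only [Nat.castOrderEmbedding_apply] at hk
      omega
    have hOu_order : (HahnSeries.ofPowerSeries ℤ ℝ u).order = 0 := by
      apply le_antisymm
      · apply HahnSeries.order_le_of_coeff_ne_zero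
        rw [hOu_coeff0]; norm_num
      · by_contra h
        push_neg at h
        have := mt HahnSeries.coeff_order_eq_zero.mp hOu_ne
        exact this (hOu_nonneg _ h)
    have : HahnSeries.ofPowerSeries ℤ ℝ y =
        HahnSeries.single (3 : ℤ) 1 * HahnSeries.ofPowerSeries ℤ ℝ u := by
      rw [hy_def, map_mul, HahnSeries.ofPowerSeries_X_pow]
      norm_num
    rw [this, HahnSeries.order_mul (by simp [HahnSeries.single_ne_zero]) hOu_ne,
      HahnSeries.order_single (one_ne_zero), hOu_order, add_zero]

end
end
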